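/- arXiv:math/0510043 — 5 statements merged into one kernel-verified Lean document; each statement's English description precedes it below -/
import Mathlib

section
/- Let G be a moderate function, let X and (X_n)_{n≥1} be i.i.d. integrable real random variables with E[X]=0, let (X'_n) be an independent copy of the sequence (X_n), and set X*_n := X_n − X'_n, X* := X − X' where X' is an independent copy of X. Then the condition 'for every a > 0, Σ_{n≥1} n^{-1}·G(n)·P[|S_n/n| ≥ a] < ∞' holds for the sequence (X_n) if and only if it holds for the symmetrized sequence (X*_n). -/
open MeasureTheory ProbabilityTheory ENNReal

/-- Partial sums `S_n = X_1 + ⋯ + X_n` (here `X i` for `i < n`). -/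
noncomputable def partialSum {Ω : Type*} (X : ℕ → Ω → ℝ) (n : ℕ) (ω : Ω) : ℝ :=
  ∑ i ∈ Finset.range n, X i ω

/-- The last deviation time `L_a = sup({0} ∪ {n ≥ 1 : |S_n/n| ≥ a}) ∈ ℕ ∪ {∞}`. -/
noncomputable def lastDev {Ω : Type*} (X : ℕ → Ω → ℝ) (a : ℝ) (ω : Ω) : ℕ∞ :=
  ⨆ n ∈ {n : ℕ | 1 ≤ n ∧ a ≤ |partialSum X n ω / n|}, (n : ℕ∞)

/-- Evaluation of `G` at an extended natural number, with `G(∞) = ∞`. -/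
noncomputable def evalG (G : ℝ → ℝ) : ℕ∞ → ℝ≥0∞
  | ⊤ => ⊤
  | (n : ℕ) => ENNReal.ofReal (G n)

/-- A positive function on `[0,∞)` is moderate if it is non-decreasing, tends to `+∞`,
and `G(2t) ≤ c·G(t)`. -/
def Moderate (G : ℝ → ℝ) : Prop :=
  (∀ t ≥ 0, 0 < G t) ∧ MonotoneOn G (Set.Ici 0) ∧
    Filter.Tendsto G Filter.atTop Filter.atTop ∧
    ∃ c : ℝ, ∀ t ≥ 0, G (2 * t) ≤ c * G t

/-- The series `S(X,G,a) = Σ_{n ≥ 1} n⁻¹ G(n) P[|S_n/n| ≥ a]`, valued in `ℝ≥0∞`. -/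
noncomputable def devSeries {Ω : Type*} [MeasurableSpace Ω] (μ : Measure Ω)
    (X : ℕ → Ω → ℝ) (G : ℝ → ℝ) (a : ℝ) : ℝ≥0∞ :=
  ∑' n : {n : ℕ // 1 ≤ n}, ((n : ℕ) : ℝ≥0∞)⁻¹ * ENNReal.ofReal (G (n : ℕ)) *
    μ {ω | a ≤ |partialSum X (n : ℕ) ω / (n : ℕ)|}

/- ### Auxiliary lemmas -/

/-- Tail comparison of two `ℝ≥0∞`-valued series. -/
lemma aux_tsum_tail {f g : {n : ℕ // 1 ≤ n} → ℝ≥0∞} (hf : ∀ n, f n ≠ ⊤)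
    (C : ℝ≥0∞) (hC : C ≠ ⊤) (N : ℕ)
    (hle : ∀ n : {n : ℕ // 1 ≤ n}, N ≤ (n : ℕ) → f n ≤ C * g n)
    (hg : ∑' n, g n ≠ ⊤) : ∑' n, f n < ⊤ := by
  classical
  set h : {n : ℕ // 1 ≤ n} → ℝ≥0∞ := fun n => if ((n : ℕ) < N) then f n else 0 with hh
  have hfb : ∀ n, f n ≤ C * g n + h n := by
    intro n
    by_cases hn : (n : ℕ) < N
    · simp only [hh, if_pos hn]
      exact le_add_self
    · simpa [hh, if_neg hn] using hle n (not_lt.1 hn)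
  have h1 : ∑' n, f n ≤ C * ∑' n, g n + ∑' n, h n := by
    rw [← ENNReal.tsum_mul_left, ← ENNReal.tsum_add]
    exact ENNReal.tsum_le_tsum hfb
  have h2 : ∑' n, h n < ⊤ := by
    rw [tsum_eq_sum (s := (Finset.range N).subtype fun n => 1 ≤ n)
      (by
        intro b hb
        have hbN : ¬ (b : ℕ) < N := by
          intro hbN
          exact hb (by simp [Finset.mem_subtype, Finset.mem_range, hbN])
        simp [hh, hbN])]
    refine ENNReal.sum_lt_top.2 fun b _ => ?_
    by_cases hb : (b : ℕ) < N <;> simp [hh, hb, lt_top_iff_ne_top, hf b]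
  refine lt_of_le_of_lt h1 (ENNReal.add_lt_top.2 ⟨?_, h2⟩)
  exact ENNReal.mul_lt_top hC.lt_top hg.lt_top

/-- Sums of independent identically distributed pairs are identically distributed. -/
lemma aux_identDistrib_add {Ω : Type*} [MeasurableSpace Ω] {μ : Measure Ω}
    [IsFiniteMeasure μ]
    {f g f' g' : Ω → ℝ} (hf : Measurable f) (hg : Measurable g)
    (hf' : Measurable f') (hg' : Measurable g')
    (hfg : IndepFun f g μ) (hfg' : IndepFun f' g' μ)
    (h1 : IdentDistrib f f' μ μ) (h2 : IdentDistrib g g' μ μ) :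
    IdentDistrib (fun ω => f ω + g ω) (fun ω => f' ω + g' ω) μ μ := by
  have hp : IdentDistrib (fun ω => (f ω, g ω)) (fun ω => (f' ω, g' ω)) μ μ := by
    refine ⟨(hf.prodMk hg).aemeasurable, (hf'.prodMk hg').aemeasurable, ?_⟩
    rw [(indepFun_iff_map_prod_eq_prod_map_map hf.aemeasurable hg.aemeasurable).1 hfg,
      (indepFun_iff_map_prod_eq_prod_map_map hf'.aemeasurable hg'.aemeasurable).1 hfg',
      h1.map_eq, h2.map_eq]
  exact hp.comp measurable_add

/-- Weak symmetrization inequality. -/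
lemma aux_key {Ω : Type*} [MeasurableSpace Ω] (μ : Measure Ω) [IsProbabilityMeasure μ]
    {Sf St : Ω → ℝ} (hSt : Measurable St)
    (hind : IndepFun Sf St μ) {a : ℝ} (ha : 0 < a) {n : ℕ} (hn : 1 ≤ n)
    (hB : μ {ω | a / 2 ≤ |St ω / n|} ≤ 1 / 2) :
    μ {ω | a ≤ |Sf ω / n|} ≤ 4 * μ {ω | a / 2 ≤ |(Sf ω - St ω) / n|} := by
  have hnp : (0 : ℝ) < n := by exact_mod_cast hn
  have htm : MeasurableSet {x : ℝ | |x| ≤ a / 2 * n} :=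
    measurableSet_le measurable_id.abs measurable_const
  -- the truncation event has probability at least 1/2
  have hcompl : (St ⁻¹' {x : ℝ | |x| ≤ a / 2 * n})ᶜ ⊆ {ω | a / 2 ≤ |St ω / n|} := by
    intro ω hω
    simp only [Set.mem_compl_iff, Set.mem_preimage, Set.mem_setOf_eq, not_le] at hω
    have h' : a / 2 ≤ |St ω| / n := by
      rw [le_div_iff₀ hnp]; linarith
    simpa [Set.mem_setOf_eq, abs_div, abs_of_pos hnp] using h'
  have h12 : (1 : ℝ≥0∞) / 2 ≤ μ (St ⁻¹' {x : ℝ | |x| ≤ a / 2 * n}) := by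
    have hms : MeasurableSet (St ⁻¹' {x : ℝ | |x| ≤ a / 2 * n}) := hSt htm
    have hc1 : μ (St ⁻¹' {x : ℝ | |x| ≤ a / 2 * n})ᶜ ≤ 1 / 2 :=
      le_trans (measure_mono hcompl) hB
    have hc2 : (1 : ℝ≥0∞) ≤ μ (St ⁻¹' {x : ℝ | |x| ≤ a / 2 * n}) + 1 / 2 := by
      have huniv : (1 : ℝ≥0∞) = μ (St ⁻¹' {x : ℝ | |x| ≤ a / 2 * n}) +
          μ (St ⁻¹' {x : ℝ | |x| ≤ a / 2 * n})ᶜ := by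
        rw [measure_add_measure_compl hms, measure_univ]
      exact huniv.le.trans (add_le_add le_rfl hc1)
    have hc3 : (1 : ℝ≥0∞) / 2 + 1 / 2 ≤ μ (St ⁻¹' {x : ℝ | |x| ≤ a / 2 * n}) + 1 / 2 := by
      rwa [ENNReal.add_halves]
    exact (ENNReal.add_le_add_iff_right
      (ENNReal.div_lt_top ENNReal.one_ne_top (by norm_num)).ne).1 hc3
  -- generic one-sided bound
  have hbound : ∀ s : Set ℝ, MeasurableSet s →
      Sf ⁻¹' s ∩ St ⁻¹' {x : ℝ | |x| ≤ a / 2 * n} ⊆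
        {ω | a / 2 ≤ |(Sf ω - St ω) / n|} →
      μ (Sf ⁻¹' s) ≤ 2 * μ {ω | a / 2 ≤ |(Sf ω - St ω) / n|} := by
    intro s hs hsub
    have heq := hind.measure_inter_preimage_eq_mul s {x : ℝ | |x| ≤ a / 2 * n} hs htm
    have hineq : μ (Sf ⁻¹' s) * (1 / 2) ≤ μ {ω | a / 2 ≤ |(Sf ω - St ω) / n|} :=
      calc μ (Sf ⁻¹' s) * (1 / 2)
          ≤ μ (Sf ⁻¹' s) * μ (St ⁻¹' {x : ℝ | |x| ≤ a / 2 * n}) := mul_le_mul_right h12 _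
        _ = μ (Sf ⁻¹' s ∩ St ⁻¹' {x : ℝ | |x| ≤ a / 2 * n}) := heq.symm
        _ ≤ _ := measure_mono hsub
    calc μ (Sf ⁻¹' s) = 2 * (μ (Sf ⁻¹' s) * (1 / 2)) := by
          rw [mul_comm (2 : ℝ≥0∞), mul_assoc, one_div,
            ENNReal.inv_mul_cancel two_ne_zero ENNReal.ofNat_ne_top, mul_one]
      _ ≤ 2 * μ {ω | a / 2 ≤ |(Sf ω - St ω) / n|} := mul_le_mul_right hineq _
  -- upper tail
  have hsubP : Sf ⁻¹' (Set.Ici (a * n)) ∩ St ⁻¹' {x : ℝ | |x| ≤ a / 2 * n} ⊆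
      {ω | a / 2 ≤ |(Sf ω - St ω) / n|} := by
    rintro ω ⟨h1, h2⟩
    simp only [Set.mem_preimage, Set.mem_Ici, Set.mem_setOf_eq] at h1 h2
    have habs := abs_le.1 h2
    have hq : a / 2 ≤ (Sf ω - St ω) / n := by
      rw [le_div_iff₀ hnp]; linarith
    exact le_trans hq (le_abs_self _)
  -- lower tail
  have hsubM : Sf ⁻¹' (Set.Iic (-(a * n))) ∩ St ⁻¹' {x : ℝ | |x| ≤ a / 2 * n} ⊆
      {ω | a / 2 ≤ |(Sf ω - St ω) / n|} := by
    rintro ω ⟨h1, h2⟩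
    simp only [Set.mem_preimage, Set.mem_Iic, Set.mem_setOf_eq] at h1 h2
    have habs := abs_le.1 h2
    have hq : (Sf ω - St ω) / n ≤ -(a / 2) := by
      rw [div_le_iff₀ hnp]; linarith
    have hna := neg_abs_le ((Sf ω - St ω) / n)
    simp only [Set.mem_setOf_eq]
    linarith
  have hcover : {ω | a ≤ |Sf ω / n|} ⊆
      Sf ⁻¹' (Set.Ici (a * n)) ∪ Sf ⁻¹' (Set.Iic (-(a * n))) := by
    intro ω hω
    simp only [Set.mem_setOf_eq] at hω
    rcases le_abs.1 hω with h | h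
    · left
      simp only [Set.mem_preimage, Set.mem_Ici]
      rw [le_div_iff₀ hnp] at h; exact h
    · right
      simp only [Set.mem_preimage, Set.mem_Iic]
      have h' : Sf ω / n ≤ -a := by linarith
      rw [div_le_iff₀ hnp] at h'; linarith
  calc μ {ω | a ≤ |Sf ω / n|}
      ≤ μ (Sf ⁻¹' (Set.Ici (a * n))) + μ (Sf ⁻¹' (Set.Iic (-(a * n)))) :=
        le_trans (measure_mono hcover) (measure_union_le _ _)
    _ ≤ 2 * μ {ω | a / 2 ≤ |(Sf ω - St ω) / n|} +
        2 * μ {ω | a / 2 ≤ |(Sf ω - St ω) / n|} :=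
        add_le_add (hbound _ measurableSet_Ici hsubP) (hbound _ measurableSet_Iic hsubM)
    _ = 4 * μ {ω | a / 2 ≤ |(Sf ω - St ω) / n|} := by ring

/-- `Z (n, false)` plays the role of `X_n` and `Z (n, true)` the role of `X'_n`, an
independent copy of the sequence; joint independence of the family `Z` encodes the fact
that `(X'_n)` is an independent copy of the i.i.d. sequence `(X_n)`. -/
theorem stmt10 {Ω : Type*} [MeasurableSpace Ω] (μ : Measure Ω) [IsProbabilityMeasure μ]
    (X : Ω → ℝ) (Z : ℕ × Bool → Ω → ℝ)
    (hX : Measurable X) (hZ : ∀ p, Measurable (Z p))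
    (hindep : iIndepFun Z μ)
    (hident : ∀ p, IdentDistrib (Z p) X μ μ)
    (hint : Integrable X μ) (hcent : μ[X] = 0)
    (G : ℝ → ℝ) (hG : Moderate G) :
    (∀ a > (0 : ℝ), devSeries μ (fun n => Z (n, false)) G a < ⊤) ↔
      (∀ a > (0 : ℝ),
        devSeries μ (fun n ω => Z (n, false) ω - Z (n, true) ω) G a < ⊤) := by
  classical
  set Xf : ℕ → Ω → ℝ := fun i => Z (i, false) with hXfdef
  set Xt : ℕ → Ω → ℝ := fun i => Z (i, true) with hXtdef
  have hmSf : ∀ n, Measurable (partialSum Xf n) := fun n =>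
    Finset.measurable_sum _ fun i _ => hZ _
  have hmSt : ∀ n, Measurable (partialSum Xt n) := fun n =>
    Finset.measurable_sum _ fun i _ => hZ _
  -- the difference of partial sums
  have hdiff : ∀ n ω, partialSum (fun i ω => Xf i ω - Xt i ω) n ω =
      partialSum Xf n ω - partialSum Xt n ω := by
    intro n ω
    simp [partialSum, Finset.sum_sub_distrib]
  -- sums over image finsets agree with partial sums
  have himage : ∀ (b : Bool) (n : ℕ) (ω : Ω),
      ∑ p ∈ (Finset.range n).image (fun i => (i, b)), Z p ω =
        partialSum (fun i => Z (i, b)) n ω := by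
    intro b n ω
    rw [Finset.sum_image (by intro x _ y _ h; exact (Prod.ext_iff.1 h).1)]
    rfl
  -- independence of the two partial sums
  have hindSS : ∀ n, IndepFun (partialSum Xf n) (partialSum Xt n) μ := by
    intro n
    have hST : Disjoint ((Finset.range n).image (fun i => (i, false)))
        ((Finset.range n).image (fun i => (i, true))) := by
      refine Finset.disjoint_left.2 ?_
      intro p hp1 hp2
      simp only [Finset.mem_image, Finset.mem_range] at hp1 hp2
      obtain ⟨i, _, rfl⟩ := hp1
      obtain ⟨j, _, hj⟩ := hp2
      exact absurd (Prod.ext_iff.1 hj).2 (by simp)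
    have h0 := hindep.indepFun_finset _ _ hST hZ
    have hφ : ∀ (S : Finset (ℕ × Bool)),
        Measurable (fun v : S → ℝ => ∑ i ∈ Finset.univ, v i) := fun S =>
      Finset.measurable_sum _ fun i _ => measurable_pi_apply i
    have h1 := h0.comp (hφ _) (hφ _)
    have he : ∀ b : Bool,
        ((fun v : ((Finset.range n).image (fun i => (i, b)) : Finset (ℕ × Bool)) → ℝ =>
            ∑ i ∈ Finset.univ, v i) ∘
          fun a (i : ((Finset.range n).image (fun i => (i, b)) : Finset (ℕ × Bool))) => Z i a) =
        partialSum (fun i => Z (i, b)) n := by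
      intro b
      funext a
      simp only [Function.comp_apply]
      rw [← himage b n a]
      exact Finset.sum_coe_sort ((Finset.range n).image (fun i => (i, b))) (fun p => Z p a)
    have he1 := he false
    have he2 := he true
    rw [he1, he2] at h1
    exact h1
  -- independence of a partial sum and the next increment, for each copy
  have hindNext : ∀ (b : Bool) (n : ℕ),
      IndepFun (partialSum (fun i => Z (i, b)) n) (Z (n, b)) μ := by
    intro b n
    have hnm : (n, b) ∉ (Finset.range n).image (fun i => (i, b)) := by
      simp only [Finset.mem_image, Finset.mem_range]
      rintro ⟨i, hi, h⟩
      have hin := (Prod.ext_iff.1 h).1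
      omega
    have h := hindep.indepFun_finsetSum_of_notMem hZ hnm
    have he : (∑ j ∈ (Finset.range n).image (fun i => (i, b)), Z j) =
        partialSum (fun i => Z (i, b)) n := by
      funext ω
      rw [Finset.sum_apply, himage]
    rwa [he] at h
  -- identical distribution of the two partial sums
  have hiden : ∀ n, IdentDistrib (partialSum Xt n) (partialSum Xf n) μ μ := by
    intro n
    induction n with
    | zero =>
      have h0 : partialSum Xt 0 = partialSum Xf 0 := by
        funext ω; simp [partialSum]
      rw [h0]
      exact IdentDistrib.refl (hmSf 0).aemeasurable
    | succ n ih =>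
      have e1 : partialSum Xt (n + 1) = fun ω => partialSum Xt n ω + Xt n ω := by
        funext ω; simp [partialSum, Finset.sum_range_succ]
      have e2 : partialSum Xf (n + 1) = fun ω => partialSum Xf n ω + Xf n ω := by
        funext ω; simp [partialSum, Finset.sum_range_succ]
      rw [e1, e2]
      exact aux_identDistrib_add (hmSt n) (hZ _) (hmSf n) (hZ _)
        (hindNext true n) (hindNext false n) ih
        ((hident (n, true)).trans (hident (n, false)).symm)
  -- measurability of the relevant sets in ℝ
  have hsetm : ∀ (c : ℝ) (n : ℕ), MeasurableSet {x : ℝ | c ≤ |x / (n : ℝ)|} :=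
    fun c n => measurableSet_le measurable_const (measurable_id.div_const _).abs
  -- equality of tail probabilities for the two copies
  have hprobeq : ∀ (c : ℝ) (n : ℕ),
      μ {ω | c ≤ |partialSum Xt n ω / n|} = μ {ω | c ≤ |partialSum Xf n ω / n|} := by
    intro c n
    exact (hiden n).measure_mem_eq (hsetm c n)
  -- finiteness of the generic term
  have hterm_ne_top : ∀ (Y : ℕ → Ω → ℝ) (c : ℝ) (n : {n : ℕ // 1 ≤ n}),
      ((n : ℕ) : ℝ≥0∞)⁻¹ * ENNReal.ofReal (G (n : ℕ)) *
        μ {ω | c ≤ |partialSum Y (n : ℕ) ω / (n : ℕ)|} ≠ ⊤ := by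
    intro Y c n
    have h1 : (((n : ℕ) : ℝ≥0∞))⁻¹ ≠ ⊤ :=
      ENNReal.inv_ne_top.2 (Nat.cast_ne_zero.2 (Nat.one_le_iff_ne_zero.1 n.2))
    exact ENNReal.mul_ne_top (ENNReal.mul_ne_top h1 ENNReal.ofReal_ne_top) (measure_ne_top μ _)
  -- strong law for the independent copy
  have hSLLN : ∀ᵐ ω ∂μ, Filter.Tendsto (fun n : ℕ => partialSum Xt n ω / n)
      Filter.atTop (nhds 0) := by
    have hint0 : Integrable (Xt 0) μ := (hident (0, true)).integrable_iff.2 hint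
    have hpair : Pairwise (Function.onFun (IndepFun · · μ) Xt) := by
      intro i j hij
      exact hindep.indepFun (by simp [Prod.ext_iff, hij])
    have hid0 : ∀ i, IdentDistrib (Xt i) (Xt 0) μ μ := fun i =>
      (hident (i, true)).trans (hident (0, true)).symm
    have h := strong_law_ae Xt hint0 hpair hid0
    have hmean : μ[Xt 0] = 0 := by
      rw [(hident (0, true)).integral_eq]; exact hcent
    rw [hmean] at h
    filter_upwards [h] with ω hω
    simpa [partialSum, div_eq_inv_mul] using hω
  have hTIM : TendstoInMeasure μ (fun n ω => partialSum Xt n ω / n)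
      Filter.atTop (fun _ => (0 : ℝ)) :=
    tendstoInMeasure_of_tendsto_ae
      (fun n => ((hmSt n).div_const _).aestronglyMeasurable) hSLLN
  constructor
  · -- forward: original ⇒ symmetrized
    intro hloc a ha
    rw [devSeries]
    refine aux_tsum_tail
      (g := fun n : {n : ℕ // 1 ≤ n} => ((n : ℕ) : ℝ≥0∞)⁻¹ * ENNReal.ofReal (G (n : ℕ)) *
        μ {ω | a / 2 ≤ |partialSum Xf (n : ℕ) ω / (n : ℕ)|})
      (hterm_ne_top _ a) 2 ENNReal.ofNat_ne_top 0 ?_ ?_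
    · intro n _
      have hsub : {ω | a ≤ |partialSum (fun i ω => Xf i ω - Xt i ω) (n : ℕ) ω / (n : ℕ)|} ⊆
          {ω | a / 2 ≤ |partialSum Xf (n : ℕ) ω / (n : ℕ)|} ∪
          {ω | a / 2 ≤ |partialSum Xt (n : ℕ) ω / (n : ℕ)|} := by
        intro ω hω
        simp only [Set.mem_setOf_eq, hdiff] at hω
        by_contra hcon
        simp only [Set.mem_union, Set.mem_setOf_eq, not_or, not_le] at hcon
        have habs : |(partialSum Xf (n : ℕ) ω - partialSum Xt (n : ℕ) ω) / (n : ℕ)| ≤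
            |partialSum Xf (n : ℕ) ω / (n : ℕ)| + |partialSum Xt (n : ℕ) ω / (n : ℕ)| := by
          rw [sub_div]
          exact abs_sub _ _
        linarith [hcon.1, hcon.2]
      have hμ : μ {ω | a ≤ |partialSum (fun i ω => Xf i ω - Xt i ω) (n : ℕ) ω / (n : ℕ)|} ≤
          2 * μ {ω | a / 2 ≤ |partialSum Xf (n : ℕ) ω / (n : ℕ)|} := by
        calc μ {ω | a ≤ |partialSum (fun i ω => Xf i ω - Xt i ω) (n : ℕ) ω / (n : ℕ)|}
            ≤ μ {ω | a / 2 ≤ |partialSum Xf (n : ℕ) ω / (n : ℕ)|} +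
              μ {ω | a / 2 ≤ |partialSum Xt (n : ℕ) ω / (n : ℕ)|} :=
              le_trans (measure_mono hsub) (measure_union_le _ _)
          _ = 2 * μ {ω | a / 2 ≤ |partialSum Xf (n : ℕ) ω / (n : ℕ)|} := by
              rw [hprobeq]; ring
      calc ((n : ℕ) : ℝ≥0∞)⁻¹ * ENNReal.ofReal (G (n : ℕ)) *
            μ {ω | a ≤ |partialSum (fun i ω => Xf i ω - Xt i ω) (n : ℕ) ω / (n : ℕ)|}
          ≤ ((n : ℕ) : ℝ≥0∞)⁻¹ * ENNReal.ofReal (G (n : ℕ)) *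
            (2 * μ {ω | a / 2 ≤ |partialSum Xf (n : ℕ) ω / (n : ℕ)|}) :=
            mul_le_mul_right hμ _
        _ = 2 * (((n : ℕ) : ℝ≥0∞)⁻¹ * ENNReal.ofReal (G (n : ℕ)) *
            μ {ω | a / 2 ≤ |partialSum Xf (n : ℕ) ω / (n : ℕ)|}) := by ring
    · exact (hloc (a / 2) (by positivity)).ne
  · -- backward: symmetrized ⇒ original
    intro hloc a ha
    -- eventually the copy's tail probability is at most 1/2
    have hEv : ∀ᶠ n : ℕ in Filter.atTop,
        μ {ω | a / 2 ≤ |partialSum Xt n ω / n|} ≤ 1 / 2 := by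
      have h := hTIM (ENNReal.ofReal (a / 2)) (ENNReal.ofReal_pos.2 (by positivity))
      have h2 := h.eventually_lt_const (by norm_num : (0 : ℝ≥0∞) < 1 / 2)
      filter_upwards [h2] with n hn
      have hset : {x | ENNReal.ofReal (a / 2) ≤ edist (partialSum Xt n x / n) 0} =
          {ω | a / 2 ≤ |partialSum Xt n ω / n|} := by
        ext x; rw [Set.mem_setOf_eq, Set.mem_setOf_eq, edist_dist,
          ENNReal.ofReal_le_ofReal_iff dist_nonneg]; simp [Real.dist_eq, abs_div, Nat.abs_cast]
      rw [hset] at hn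
      exact hn.le
    obtain ⟨N, hN⟩ := Filter.eventually_atTop.1 hEv
    rw [devSeries]
    refine aux_tsum_tail
      (g := fun n : {n : ℕ // 1 ≤ n} => ((n : ℕ) : ℝ≥0∞)⁻¹ * ENNReal.ofReal (G (n : ℕ)) *
        μ {ω | a / 2 ≤ |partialSum (fun i ω => Xf i ω - Xt i ω) (n : ℕ) ω / (n : ℕ)|})
      (hterm_ne_top _ a) 4 (by norm_num) N ?_ ?_
    · intro n hn
      have hkey := aux_key μ (hmSt (n : ℕ)) (hindSS (n : ℕ)) ha n.2 (hN (n : ℕ) hn)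
      have hμ : μ {ω | a ≤ |partialSum Xf (n : ℕ) ω / (n : ℕ)|} ≤
          4 * μ {ω | a / 2 ≤
            |partialSum (fun i ω => Xf i ω - Xt i ω) (n : ℕ) ω / (n : ℕ)|} := by
        have hre : {ω | a / 2 ≤
            |partialSum (fun i ω => Xf i ω - Xt i ω) (n : ℕ) ω / (n : ℕ)|} =
            {ω | a / 2 ≤ |(partialSum Xf (n : ℕ) ω - partialSum Xt (n : ℕ) ω) / (n : ℕ)|} := by
          ext ω; simp [hdiff]
        rw [hre]
        exact hkey
      calc ((n : ℕ) : ℝ≥0∞)⁻¹ * ENNReal.ofReal (G (n : ℕ)) *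
            μ {ω | a ≤ |partialSum Xf (n : ℕ) ω / (n : ℕ)|}
          ≤ ((n : ℕ) : ℝ≥0∞)⁻¹ * ENNReal.ofReal (G (n : ℕ)) *
            (4 * μ {ω | a / 2 ≤
              |partialSum (fun i ω => Xf i ω - Xt i ω) (n : ℕ) ω / (n : ℕ)|}) :=
            mul_le_mul_right hμ _
        _ = 4 * (((n : ℕ) : ℝ≥0∞)⁻¹ * ENNReal.ofReal (G (n : ℕ)) *
            μ {ω | a / 2 ≤
              |partialSum (fun i ω => Xf i ω - Xt i ω) (n : ℕ) ω / (n : ℕ)|}) := by ring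
    · exact (hloc (a / 2) (by positivity)).ne
end

section
/- Let G be a moderate function, let X and (X_n)_{n≥1} be i.i.d. integrable real random variables with E[X]=0, let (X'_n) be an independent copy of the sequence (X_n), and set X*_n := X_n − X'_n. Then the condition 'for every a > 0, the last deviation time L_a is almost surely finite and G(L_a) is integrable' holds for the partial sums of (X_n) if and only if it holds for the partial sums of the symmetrized sequence (X*_n). -/
open MeasureTheory ProbabilityTheory ENNReal

section Aux

open Filter Set Finset

variable {Ω : Type*} [MeasurableSpace Ω] {μ : Measure Ω}

/-- The event that some Cesàro mean with index `≥ N` deviates by at least `a`. -/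
def devSet (Y : ℕ → Ω → ℝ) (a : ℝ) (N : ℕ) : Set Ω :=
  {ω | ∃ j, N ≤ j ∧ 1 ≤ j ∧ a ≤ |partialSum Y j ω / j|}

lemma measurable_partialSum {Y : ℕ → Ω → ℝ} (hY : ∀ n, Measurable (Y n)) (n : ℕ) :
    Measurable (partialSum Y n) := by
  unfold partialSum
  exact Finset.measurable_sum _ fun i _ => hY i

lemma measurableSet_devSet {Y : ℕ → Ω → ℝ} (hY : ∀ n, Measurable (Y n)) (a : ℝ) (N : ℕ) :
    MeasurableSet (devSet Y a N) := by
  have : devSet Y a N = ⋃ j, ⋃ (_ : N ≤ j ∧ 1 ≤ j), {ω | a ≤ |partialSum Y j ω / j|} := by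
    ext ω; simp [devSet, and_assoc]
  rw [this]
  refine MeasurableSet.iUnion fun j => MeasurableSet.iUnion fun _ => ?_
  exact measurableSet_le measurable_const (((measurable_partialSum hY j).div_const _).abs)

lemma measurableSet_absLe {Y : ℕ → Ω → ℝ} (hY : ∀ n, Measurable (Y n)) (a : ℝ) (k : ℕ) :
    MeasurableSet {ω | a ≤ |partialSum Y k ω / (k : ℝ)|} :=
  measurableSet_le measurable_const (((measurable_partialSum hY k).div_const _).abs)

lemma measurableSet_absLt {Y : ℕ → Ω → ℝ} (hY : ∀ n, Measurable (Y n)) (a : ℝ) (k : ℕ) :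
    MeasurableSet {ω | |partialSum Y k ω / (k : ℝ)| < a} :=
  measurableSet_lt (((measurable_partialSum hY k).div_const _).abs) measurable_const

lemma lastDev_ge_iff {Y : ℕ → Ω → ℝ} {a : ℝ} {ω : Ω} {k : ℕ} (hk : 1 ≤ k) :
    (k : ℕ∞) ≤ lastDev Y a ω ↔ ω ∈ devSet Y a k := by
  constructor
  · intro h
    by_contra hc
    simp only [devSet, Set.mem_setOf_eq, not_exists, not_and] at hc
    have hle : lastDev Y a ω ≤ ((k - 1 : ℕ) : ℕ∞) := by
      refine iSup₂_le fun j hj => ?_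
      have hjk : ¬ k ≤ j := fun hkj => hc j hkj hj.1 hj.2
      exact_mod_cast Nat.le_sub_one_of_lt (Nat.lt_of_not_le hjk)
    have := le_trans h hle
    have hkk : k ≤ k - 1 := by exact_mod_cast this
    omega
  · rintro ⟨j, hkj, hj⟩
    exact le_trans (by exact_mod_cast hkj) (le_iSup₂_of_le j hj le_rfl)

noncomputable def gE (G : ℝ → ℝ) (n : ℕ) : ℝ≥0∞ := ENNReal.ofReal (G n)

noncomputable def dE (G : ℝ → ℝ) (k : ℕ) : ℝ≥0∞ := gE G (k + 1) - gE G k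

lemma gE_mono {G : ℝ → ℝ} (hmono : MonotoneOn G (Set.Ici 0)) : Monotone (gE G) := by
  intro m n h
  exact ENNReal.ofReal_le_ofReal <| hmono (Set.mem_Ici.2 (Nat.cast_nonneg m))
    (Set.mem_Ici.2 (Nat.cast_nonneg n)) (by exact_mod_cast h)

lemma gE_ne_top (G : ℝ → ℝ) (n : ℕ) : gE G n ≠ ⊤ := ENNReal.ofReal_ne_top

lemma gE_telescope {G : ℝ → ℝ} (hmono : MonotoneOn G (Set.Ici 0)) (m : ℕ) :
    gE G 0 + ∑ k ∈ Finset.range m, dE G k = gE G m := by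
  induction m with
  | zero => simp
  | succ m ih =>
    rw [Finset.sum_range_succ, ← add_assoc, ih, dE,
      add_tsub_cancel_of_le (gE_mono hmono (Nat.le_succ m))]

lemma tsum_dE_eq_top {G : ℝ → ℝ} (hmono : MonotoneOn G (Set.Ici 0))
    (htop : Filter.Tendsto G Filter.atTop Filter.atTop) :
    ∑' k, dE G k = ⊤ := by
  by_contra hfin
  set C : ℝ≥0∞ := gE G 0 + ∑' k, dE G k with hC
  have hCne : C ≠ ⊤ := by
    simp only [hC, Ne, ENNReal.add_eq_top, gE_ne_top, false_or]
    exact hfin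
  have hub : ∀ m : ℕ, gE G m ≤ C := by
    intro m
    rw [← gE_telescope hmono m]
    exact add_le_add le_rfl (ENNReal.sum_le_tsum _)
  obtain ⟨t0, ht0⟩ := (tendsto_atTop_atTop.1 htop) (C.toReal + 1)
  obtain ⟨m, hm⟩ := exists_nat_ge t0
  have h1 : ENNReal.ofReal (C.toReal + 1) ≤ gE G m :=
    ENNReal.ofReal_le_ofReal (ht0 m hm)
  have h2 : C < ENNReal.ofReal (C.toReal + 1) := by
    conv_lhs => rw [← ENNReal.ofReal_toReal hCne]
    exact (ENNReal.ofReal_lt_ofReal_iff (by positivity)).2 (by linarith)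
  exact absurd (le_trans h1 (hub m)) (not_le.2 h2)

lemma evalG_coe (G : ℝ → ℝ) (m : ℕ) : evalG G (m : ℕ∞) = ENNReal.ofReal (G m) := rfl

lemma evalG_top (G : ℝ → ℝ) : evalG G ⊤ = ⊤ := rfl

lemma evalG_lastDev_eq {G : ℝ → ℝ} (hmono : MonotoneOn G (Set.Ici 0))
    (htop : Filter.Tendsto G Filter.atTop Filter.atTop)
    (Y : ℕ → Ω → ℝ) (a : ℝ) (ω : Ω) :
    evalG G (lastDev Y a ω)
      = gE G 0 + ∑' k : ℕ, (devSet Y a (k + 1)).indicator (fun _ => dE G k) ω := by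
  by_cases hT : lastDev Y a ω = ⊤
  · have hmem : ∀ k : ℕ, ω ∈ devSet Y a (k + 1) := by
      intro k
      refine (lastDev_ge_iff (Nat.succ_le_succ (Nat.zero_le k))).1 ?_
      rw [hT]; exact le_top
    have : ∑' k : ℕ, (devSet Y a (k + 1)).indicator (fun _ => dE G k) ω = ∑' k, dE G k := by
      congr 1; funext k; exact Set.indicator_of_mem (hmem k) _
    rw [hT, evalG_top, this, tsum_dE_eq_top hmono htop]
    simp
  · obtain ⟨m, hm0⟩ := WithTop.ne_top_iff_exists.1 hT
    have hm : ((m : ℕ) : ℕ∞) = lastDev Y a ω := hm0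
    rw [← hm]
    show ENNReal.ofReal (G m) = _
    have hiff : ∀ k : ℕ, ω ∈ devSet Y a (k + 1) ↔ k + 1 ≤ m := by
      intro k
      rw [← lastDev_ge_iff (Nat.succ_le_succ (Nat.zero_le k)), ← hm, Nat.cast_le]
    have hsum : ∑' k : ℕ, (devSet Y a (k + 1)).indicator (fun _ => dE G k) ω
        = ∑ k ∈ Finset.range m, dE G k := by
      rw [tsum_eq_sum (s := Finset.range m) ?h]
      · refine Finset.sum_congr rfl fun k hk => ?_
        exact Set.indicator_of_mem ((hiff k).2 (Finset.mem_range.1 hk)) _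
      case h =>
        intro k hk
        refine Set.indicator_of_notMem ?_ _
        rw [hiff k]
        exact fun h => hk (Finset.mem_range.2 h)
    rw [hsum, gE_telescope hmono m, gE]

lemma lintegral_evalG_lastDev [IsProbabilityMeasure μ] {G : ℝ → ℝ}
    (hmono : MonotoneOn G (Set.Ici 0))
    (htop : Filter.Tendsto G Filter.atTop Filter.atTop)
    {Y : ℕ → Ω → ℝ} (hY : ∀ n, Measurable (Y n)) (a : ℝ) :
    ∫⁻ ω, evalG G (lastDev Y a ω) ∂μ
      = gE G 0 + ∑' k : ℕ, dE G k * μ (devSet Y a (k + 1)) := by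
  have heq : ∀ ω, evalG G (lastDev Y a ω)
      = gE G 0 + ∑' k : ℕ, (devSet Y a (k + 1)).indicator (fun _ => dE G k) ω :=
    evalG_lastDev_eq hmono htop Y a
  simp_rw [heq]
  rw [lintegral_add_left measurable_const, lintegral_const, measure_univ, mul_one,
    lintegral_tsum fun k => ((measurable_const.indicator
      (measurableSet_devSet hY a (k + 1)))).aemeasurable]
  congr 1
  exact tsum_congr fun k => lintegral_indicator_const (measurableSet_devSet hY a (k + 1)) (dE G k)

lemma cond_iff_phi [IsProbabilityMeasure μ] {G : ℝ → ℝ}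
    (hmono : MonotoneOn G (Set.Ici 0))
    (htop : Filter.Tendsto G Filter.atTop Filter.atTop)
    {Y : ℕ → Ω → ℝ} (hY : ∀ n, Measurable (Y n)) (a : ℝ) :
    ((∀ᵐ ω ∂μ, lastDev Y a ω ≠ ⊤) ∧ ∫⁻ ω, evalG G (lastDev Y a ω) ∂μ < ⊤)
      ↔ ∑' k : ℕ, dE G k * μ (devSet Y a (k + 1)) < ⊤ := by
  rw [lintegral_evalG_lastDev hmono htop hY a]
  constructor
  · rintro ⟨-, h⟩
    exact lt_of_le_of_lt le_add_self h
  · intro h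
    refine ⟨?_, ENNReal.add_lt_top.2 ⟨ENNReal.ofReal_lt_top, h⟩⟩
    have hsub : ∀ k : ℕ, {ω | lastDev Y a ω = ⊤} ⊆ devSet Y a (k + 1) := by
      intro k ω hω
      refine (lastDev_ge_iff (Nat.succ_le_succ (Nat.zero_le k))).1 ?_
      have hω' : lastDev Y a ω = ⊤ := hω
      rw [hω']; exact le_top
    rw [ae_iff]
    simp only [not_not]
    by_contra hne
    have hpos : μ {ω | lastDev Y a ω = ⊤} ≠ 0 := hne
    have hbig : (⊤ : ℝ≥0∞) ≤ ∑' k : ℕ, dE G k * μ (devSet Y a (k + 1)) := by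
      calc (⊤ : ℝ≥0∞) = (∑' k, dE G k) * μ {ω | lastDev Y a ω = ⊤} := by
            rw [tsum_dE_eq_top hmono htop, ENNReal.top_mul hpos]
        _ = ∑' k : ℕ, dE G k * μ {ω | lastDev Y a ω = ⊤} := ENNReal.tsum_mul_right.symm
        _ ≤ ∑' k : ℕ, dE G k * μ (devSet Y a (k + 1)) :=
            ENNReal.tsum_le_tsum fun k => mul_le_mul_right (measure_mono (hsub k)) _
    exact absurd h (not_lt.2 hbig)

end Aux

section Main

open Filter Set Finset MeasurableSpace

variable {Ω : Type*} [MeasurableSpace Ω] {μ : Measure Ω} [IsProbabilityMeasure μ]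
variable {X : Ω → ℝ} {Z : ℕ × Bool → Ω → ℝ}

/-- law of a finite tuple of the `Z (·, b)` is the product of copies of the law of `X`. -/
lemma tuple_law (hX : Measurable X) (hZ : ∀ p, Measurable (Z p))
    (hindep : iIndepFun Z μ)
    (hident : ∀ p, IdentDistrib (Z p) X μ μ) (I : Finset ℕ) (b : Bool) :
    μ.map (fun ω (i : I) => Z (↑i, b) ω) = Measure.pi (fun _ : I => μ.map X) := by
  classical
  haveI : IsProbabilityMeasure (μ.map X) := Measure.isProbabilityMeasure_map hX.aemeasurable
  refine (Measure.pi_eq (μ := fun _ : I => μ.map X) fun s hs => ?_).symm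
  rw [Measure.map_apply (measurable_pi_lambda _ fun i => hZ _) (MeasurableSet.univ_pi hs)]
  -- preimage of the box
  have hsets2ex : ∃ sets2 : ℕ × Bool → Set ℝ, (∀ p, MeasurableSet (sets2 p)) ∧
      (∀ i : I, sets2 (↑i, b) = s i) := by
    refine ⟨fun p => if h : p.1 ∈ I ∧ p.2 = b then s ⟨p.1, h.1⟩ else Set.univ, fun p => ?_, fun i => ?_⟩
    · dsimp only
      by_cases h : p.1 ∈ I ∧ p.2 = b
      · rw [dif_pos h]; exact hs _
      · rw [dif_neg h]; exact MeasurableSet.univ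
    · dsimp only
      have h : ((i : ℕ) ∈ I ∧ b = b) := ⟨i.2, rfl⟩
      rw [dif_pos h]
  obtain ⟨sets2, hsets2_meas, hsets2_eq⟩ := hsets2ex
  have hpre : (fun ω (i : I) => Z (↑i, b) ω) ⁻¹' (Set.univ.pi s)
      = ⋂ p ∈ I.image (fun i => (i, b)), Z p ⁻¹' sets2 p := by
    ext ω
    simp only [Set.mem_preimage, Set.mem_univ_pi, Set.mem_iInter, Finset.mem_image,
      forall_exists_index, and_imp]
    constructor
    · rintro h p i hi rfl
      have : sets2 (i, b) = s ⟨i, hi⟩ := hsets2_eq ⟨i, hi⟩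
      rw [this]
      exact h ⟨i, hi⟩
    · intro h i
      have := h (↑i, b) ↑i i.2 rfl
      rwa [hsets2_eq i] at this
  rw [hpre, hindep.meas_biInter (fun p _ => ⟨sets2 p, hsets2_meas p, rfl⟩)]
  rw [Finset.prod_image (fun i _ j _ h => (Prod.mk.injEq _ _ _ _ ▸ h).1)]
  rw [← Finset.prod_coe_sort]
  refine Finset.prod_congr rfl fun i _ => ?_
  rw [hsets2_eq i, ← (hident (↑i, b)).map_eq,
    Measure.map_apply (hZ _) (hs i)]

/-- The two coordinate sequences have the same law as processes. -/
lemma seq_law (hX : Measurable X) (hZ : ∀ p, Measurable (Z p))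
    (hindep : iIndepFun Z μ)
    (hident : ∀ p, IdentDistrib (Z p) X μ μ) :
    μ.map (fun ω (n : ℕ) => Z (n, false) ω) = μ.map (fun ω (n : ℕ) => Z (n, true) ω) := by
  have hmf : Measurable (fun ω (n : ℕ) => Z (n, false) ω) :=
    measurable_pi_lambda _ fun n => hZ _
  have hmt : Measurable (fun ω (n : ℕ) => Z (n, true) ω) :=
    measurable_pi_lambda _ fun n => hZ _
  haveI : IsProbabilityMeasure (μ.map (fun ω (n : ℕ) => Z (n, false) ω)) :=
    Measure.isProbabilityMeasure_map hmf.aemeasurable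
  haveI : IsProbabilityMeasure (μ.map (fun ω (n : ℕ) => Z (n, true) ω)) :=
    Measure.isProbabilityMeasure_map hmt.aemeasurable
  refine ext_of_generate_finite (measurableCylinders (fun _ : ℕ => ℝ))
    generateFrom_measurableCylinders.symm isPiSystem_measurableCylinders (fun t ht => ?_)
    (by simp)
  obtain ⟨I, S, hS, rfl⟩ := (mem_measurableCylinders t).1 ht
  have hcyl : ∀ b : Bool, (fun ω (n : ℕ) => Z (n, b) ω) ⁻¹' cylinder I S
      = (fun ω (i : I) => Z (↑i, b) ω) ⁻¹' S := by
    intro b; rfl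
  rw [Measure.map_apply hmf hS.cylinder, Measure.map_apply hmt hS.cylinder,
    hcyl false, hcyl true,
    ← Measure.map_apply (measurable_pi_lambda _ fun i => hZ _) hS,
    ← Measure.map_apply (measurable_pi_lambda _ fun i => hZ _) hS,
    tuple_law hX hZ hindep hident I false, tuple_law hX hZ hindep hident I true]

/-- Transfer of path events between the two coordinate sequences. -/
lemma path_transfer (hX : Measurable X) (hZ : ∀ p, Measurable (Z p))
    (hindep : iIndepFun Z μ)
    (hident : ∀ p, IdentDistrib (Z p) X μ μ)
    {E : Set (ℕ → ℝ)} (hE : MeasurableSet E) :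
    μ ((fun ω (n : ℕ) => Z (n, true) ω) ⁻¹' E)
      = μ ((fun ω (n : ℕ) => Z (n, false) ω) ⁻¹' E) := by
  have hmf : Measurable (fun ω (n : ℕ) => Z (n, false) ω) :=
    measurable_pi_lambda _ fun n => hZ _
  have hmt : Measurable (fun ω (n : ℕ) => Z (n, true) ω) :=
    measurable_pi_lambda _ fun n => hZ _
  rw [← Measure.map_apply hmt hE, ← Measure.map_apply hmf hE,
    seq_law hX hZ hindep hident]

/-- The path-space deviation set. -/
lemma devSet_coord_eq (b : Bool) (Z : ℕ × Bool → Ω → ℝ) (c : ℝ) (N : ℕ) :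
    devSet (fun n => Z (n, b)) c N
      = (fun ω (n : ℕ) => Z (n, b) ω) ⁻¹' devSet (fun n (x : ℕ → ℝ) => x n) c N := rfl

lemma devSet_transfer (hX : Measurable X) (hZ : ∀ p, Measurable (Z p))
    (hindep : iIndepFun Z μ)
    (hident : ∀ p, IdentDistrib (Z p) X μ μ) (c : ℝ) (N : ℕ) :
    μ (devSet (fun n => Z (n, true)) c N) = μ (devSet (fun n => Z (n, false)) c N) := by
  rw [devSet_coord_eq true Z c N, devSet_coord_eq false Z c N]
  exact path_transfer hX hZ hindep hident
    (measurableSet_devSet (fun n => measurable_pi_apply n) c N)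

lemma single_transfer (hX : Measurable X) (hZ : ∀ p, Measurable (Z p))
    (hindep : iIndepFun Z μ)
    (hident : ∀ p, IdentDistrib (Z p) X μ μ) (c : ℝ) (k : ℕ) :
    μ {ω | c ≤ |partialSum (fun n => Z (n, true)) k ω / k|}
      = μ {ω | c ≤ |partialSum (fun n => Z (n, false)) k ω / k|} := by
  have hE : MeasurableSet {x : ℕ → ℝ | c ≤ |partialSum (fun n (x : ℕ → ℝ) => x n) k x / k|} :=
    measurableSet_le measurable_const
      (((measurable_partialSum (fun n => measurable_pi_apply n) k).div_const _).abs)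
  exact path_transfer hX hZ hindep hident hE

lemma devSet_subset_union (Yf Yt : ℕ → Ω → ℝ) (c : ℝ) (N : ℕ) :
    devSet (fun n ω => Yf n ω - Yt n ω) c N ⊆ devSet Yf (c / 2) N ∪ devSet Yt (c / 2) N := by
  rintro ω ⟨j, hNj, h1j, hc⟩
  have hsplit : partialSum (fun n ω => Yf n ω - Yt n ω) j ω
      = partialSum Yf j ω - partialSum Yt j ω := by
    unfold partialSum
    exact Finset.sum_sub_distrib _ _
  rw [hsplit, sub_div] at hc
  have habs : |partialSum Yf j ω / j - partialSum Yt j ω / j|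
      ≤ |partialSum Yf j ω / j| + |partialSum Yt j ω / j| := abs_sub _ _
  by_cases hf : c / 2 ≤ |partialSum Yf j ω / j|
  · exact Or.inl ⟨j, hNj, h1j, hf⟩
  · refine Or.inr ⟨j, hNj, h1j, ?_⟩
    push_neg at hf
    linarith [le_trans hc habs]

/-- The symmetrization inequality for tail deviation events. -/
lemma sym_bound (hX : Measurable X) (hZ : ∀ p, Measurable (Z p))
    (hindep : iIndepFun Z μ)
    (hident : ∀ p, IdentDistrib (Z p) X μ μ)
    (hint : Integrable X μ) (hcent : μ[X] = 0) {a : ℝ} (ha : 0 < a) :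
    ∃ N₀ : ℕ, 1 ≤ N₀ ∧ ∀ N, N₀ ≤ N →
      μ (devSet (fun n => Z (n, false)) a N)
        ≤ 2 * μ (devSet (fun n ω => Z (n, false) ω - Z (n, true) ω) (a / 2) N) := by
  classical
  set Yf : ℕ → Ω → ℝ := fun n => Z (n, false) with hYfdef
  set Yt : ℕ → Ω → ℝ := fun n => Z (n, true) with hYtdef
  have hYf : ∀ n, Measurable (Yf n) := fun n => hZ _
  have hYt : ∀ n, Measurable (Yt n) := fun n => hZ _
  -- strong law of large numbers for the first coordinate sequence
  have hint0 : Integrable (Yf 0) μ := ((hident (0, false)).integrable_iff).2 hint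
  have hpair : Pairwise (Function.onFun (IndepFun · · μ) Yf) := by
    intro i j hij
    exact hindep.indepFun (by simp [Prod.ext_iff, hij])
  have hidf : ∀ i, IdentDistrib (Yf i) (Yf 0) μ μ :=
    fun i => (hident (i, false)).trans (hident (0, false)).symm
  have hslln := strong_law_ae Yf hint0 hpair hidf
  have hzero : μ[Yf 0] = 0 := by
    rw [(hident (0, false)).integral_eq, hcent]
  rw [hzero] at hslln
  have hae : ∀ᵐ ω ∂μ, Filter.Tendsto (fun n => partialSum Yf n ω / n) atTop (nhds 0) := by
    filter_upwards [hslln] with ω hω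
    have : (fun n : ℕ => partialSum Yf n ω / n) = fun n : ℕ => (n : ℝ)⁻¹ • ∑ i ∈ range n, Yf i ω := by
      funext n
      rw [smul_eq_mul, inv_mul_eq_div]
      rfl
    rw [this]
    exact hω
  have htim : TendstoInMeasure μ (fun n ω => partialSum Yf n ω / n) atTop (fun _ => (0 : ℝ)) :=
    tendstoInMeasure_of_tendsto_ae
      (fun n => ((measurable_partialSum hYf n).div_const _).aestronglyMeasurable) hae
  have hev : ∀ᶠ n in atTop, μ {ω | a / 2 ≤ dist (partialSum Yf n ω / n) 0} < 1 / 2 :=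
    (tendstoInMeasure_iff_dist.1 htim (a / 2) (by linarith)).eventually_lt_const (by norm_num)
  obtain ⟨N₁, hN₁⟩ := Filter.eventually_atTop.1 hev
  have hN₁' : ∀ n, N₁ ≤ n → μ {ω | a / 2 ≤ |partialSum Yf n ω / n|} < 1 / 2 := by
    intro n hn
    have h := hN₁ n hn
    simp only [Real.dist_eq, sub_zero] at h
    exact h
  refine ⟨max N₁ 1, le_max_right _ _, fun N hN => ?_⟩
  have hN1 : 1 ≤ N := le_trans (le_max_right N₁ 1) hN
  have hNN₁ : N₁ ≤ N := le_trans (le_max_left N₁ 1) hN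
  -- the σ-algebras generated by the two coordinate sequences are independent
  set mb : Bool → MeasurableSpace Ω := fun b =>
    ⨆ p ∈ {p : ℕ × Bool | p.2 = b}, MeasurableSpace.comap (Z p) inferInstance with hmbdef
  have hle : ∀ p : ℕ × Bool, MeasurableSpace.comap (Z p) inferInstance ≤ ‹MeasurableSpace Ω› :=
    fun p => (hZ p).comap_le
  have hmble : ∀ b, mb b ≤ ‹MeasurableSpace Ω› := fun b => iSup₂_le fun p _ => hle p
  have hIndep : Indep (mb false) (mb true) μ := by
    refine indep_iSup_of_disjoint hle hindep.iIndep ?_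
    rw [Set.disjoint_left]
    intro p hp hp'
    simp only [Set.mem_setOf_eq] at hp hp'
    rw [hp] at hp'
    exact Bool.false_ne_true hp'
  have hZb : ∀ (n : ℕ) (b : Bool), Measurable[mb b] (Z (n, b)) := by
    intro n b
    rw [measurable_iff_comap_le]
    exact le_biSup (fun p => MeasurableSpace.comap (Z p) inferInstance)
      (show ((n, b) : ℕ × Bool) ∈ {p : ℕ × Bool | p.2 = b} from rfl)
  have hSfm : ∀ j, Measurable[mb false] (partialSum Yf j) :=
    fun j => @measurable_partialSum Ω (mb false) Yf (fun n => hZb n false) j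
  have hStm : ∀ j, Measurable[mb true] (partialSum Yt j) :=
    fun j => @measurable_partialSum Ω (mb true) Yt (fun n => hZb n true) j
  -- events
  set A : ℕ → Set Ω := fun k => {ω | a ≤ |partialSum Yf k ω / k|} with hAdef
  set H : ℕ → Set Ω := fun k => {ω | |partialSum Yt k ω / k| < a / 2} with hHdef
  set D : ℕ → Set Ω := fun k =>
    if N ≤ k then A k ∩ ⋂ j ∈ Finset.Ico N k, (A j)ᶜ else ∅ with hDdef
  have hAm : ∀ k, MeasurableSet[mb false] (A k) := fun k =>
    @measurableSet_absLe Ω (mb false) Yf (fun n => hZb n false) a k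
  have hHm : ∀ k, MeasurableSet[mb true] (H k) := fun k =>
    @measurableSet_absLt Ω (mb true) Yt (fun n => hZb n true) (a / 2) k
  have hDm : ∀ k, MeasurableSet[mb false] (D k) := by
    intro k
    rw [hDdef]
    dsimp only
    split
    · exact (hAm k).inter (Finset.measurableSet_biInter _ fun j _ => (hAm j).compl)
    · exact @MeasurableSet.empty Ω (mb false)
  have hDamb : ∀ k, MeasurableSet (D k) := fun k => hmble false _ (hDm k)
  have hHamb : ∀ k, MeasurableSet (H k) := fun k => hmble true _ (hHm k)
  -- disjointness
  have hDdisj : Pairwise (Function.onFun Disjoint D) := by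
    have key : ∀ i j, i < j → Disjoint (D i) (D j) := by
      intro i j hij
      rw [Set.disjoint_left]
      intro ω hωi hωj
      rw [hDdef] at hωi hωj
      dsimp only at hωi hωj
      by_cases hNi : N ≤ i
      · rw [if_pos hNi] at hωi
        by_cases hNj : N ≤ j
        · rw [if_pos hNj] at hωj
          have hmem : i ∈ Finset.Ico N j := Finset.mem_Ico.2 ⟨hNi, hij⟩
          have : ω ∈ (A i)ᶜ := by
            have h2 := hωj.2
            rw [Set.mem_iInter₂] at h2
            exact h2 i hmem
          exact this hωi.1
        · rw [if_neg hNj] at hωj; exact hωj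
      · rw [if_neg hNi] at hωi; exact hωi
    intro i j hij
    rcases hij.lt_or_gt with h | h
    · exact key i j h
    · exact (key j i h).symm
  -- the union identity
  have hunion : devSet Yf a N = ⋃ k, D k := by
    ext ω
    constructor
    · rintro ⟨j, hNj, h1j, hja⟩
      have hP : ∃ k, N ≤ k ∧ ω ∈ A k := ⟨j, hNj, hja⟩
      set k₀ := Nat.find hP with hk₀def
      obtain ⟨hk₀N, hk₀A⟩ := Nat.find_spec hP
      refine Set.mem_iUnion.2 ⟨k₀, ?_⟩
      rw [hDdef]
      dsimp only
      rw [if_pos hk₀N]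
      refine ⟨hk₀A, ?_⟩
      rw [Set.mem_iInter₂]
      intro l hl
      rw [Finset.mem_Ico] at hl
      intro hωl
      exact Nat.find_min hP hl.2 ⟨hl.1, hωl⟩
    · intro hω
      obtain ⟨k, hk⟩ := Set.mem_iUnion.1 hω
      rw [hDdef] at hk
      dsimp only at hk
      by_cases hNk : N ≤ k
      · rw [if_pos hNk] at hk
        exact ⟨k, hNk, le_trans hN1 hNk, hk.1⟩
      · rw [if_neg hNk] at hk; exact absurd hk (Set.notMem_empty ω)
  -- half-probability of H k for k ≥ N
  have hHhalf : ∀ k, N ≤ k → 1 / 2 ≤ μ (H k) := by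
    intro k hk
    have hcompl : (H k)ᶜ = {ω | a / 2 ≤ |partialSum Yt k ω / k|} := by
      ext ω; simp [hHdef, not_lt]
    have hc2 : μ ((H k)ᶜ) ≤ 1 / 2 := by
      rw [hcompl, hYtdef]
      rw [single_transfer hX hZ hindep hident (a / 2) k]
      exact le_of_lt (hN₁' k (le_trans hNN₁ hk))
    have hsum : μ (H k) + μ ((H k)ᶜ) = 1 := by
      rw [measure_add_measure_compl (hHamb k)]
      exact measure_univ
    have h1 : (1 : ℝ≥0∞) ≤ μ (H k) + 1 / 2 :=
      calc (1 : ℝ≥0∞) = μ (H k) + μ ((H k)ᶜ) := hsum.symm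
        _ ≤ μ (H k) + 1 / 2 := add_le_add le_rfl hc2
    calc (1 : ℝ≥0∞) / 2 = 1 - 1 / 2 := by rw [ENNReal.sub_half one_ne_top]
      _ ≤ μ (H k) := tsub_le_iff_right.2 h1
  -- D k ≤ 2 μ (D k ∩ H k)
  have hDH : ∀ k, μ (D k) ≤ 2 * μ (D k ∩ H k) := by
    intro k
    by_cases hNk : N ≤ k
    · have hprod : μ (D k ∩ H k) = μ (D k) * μ (H k) :=
        (Indep_iff _ _ _).1 hIndep _ _ (hDm k) (hHm k)
      calc μ (D k) = μ (D k) * (2 * (1 / 2)) := by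
            rw [show (2 : ℝ≥0∞) * (1 / 2) = 1 by
              rw [one_div, ENNReal.mul_inv_cancel two_ne_zero ENNReal.ofNat_ne_top], mul_one]
        _ = 2 * (μ (D k) * (1 / 2)) := by ring
        _ ≤ 2 * (μ (D k) * μ (H k)) :=
            mul_le_mul_right (mul_le_mul_right (hHhalf k hNk) _) _
        _ = 2 * μ (D k ∩ H k) := by rw [hprod]
    · have : D k = ∅ := by rw [hDdef]; dsimp only; rw [if_neg hNk]
      rw [this]
      simp
  -- D k ∩ H k lies in the symmetrized deviation set
  have hDHsub : ∀ k, D k ∩ H k ⊆ devSet (fun n ω => Z (n, false) ω - Z (n, true) ω) (a / 2) N := by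
    intro k
    by_cases hNk : N ≤ k
    · rintro ω ⟨hωD, hωH⟩
      rw [hDdef] at hωD
      dsimp only at hωD
      rw [if_pos hNk] at hωD
      have hA : a ≤ |partialSum Yf k ω / k| := hωD.1
      have hH' : |partialSum Yt k ω / k| < a / 2 := hωH
      refine ⟨k, hNk, le_trans hN1 hNk, ?_⟩
      have hsplit : partialSum (fun n ω => Z (n, false) ω - Z (n, true) ω) k ω
          = partialSum Yf k ω - partialSum Yt k ω := by
        unfold partialSum
        exact Finset.sum_sub_distrib _ _
      rw [hsplit, sub_div]
      have habs : |partialSum Yf k ω / k| - |partialSum Yt k ω / k|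
          ≤ |partialSum Yf k ω / k - partialSum Yt k ω / k| := abs_sub_abs_le_abs_sub _ _
      linarith
    · intro ω hω
      rw [hDdef] at hω
      dsimp only at hω
      rw [if_neg hNk] at hω
      exact absurd hω.1 (Set.notMem_empty ω)
  -- assemble
  calc μ (devSet Yf a N) = μ (⋃ k, D k) := by rw [hunion]
    _ = ∑' k, μ (D k) := measure_iUnion hDdisj hDamb
    _ ≤ ∑' k, 2 * μ (D k ∩ H k) := ENNReal.tsum_le_tsum hDH
    _ = 2 * ∑' k, μ (D k ∩ H k) := ENNReal.tsum_mul_left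
    _ = 2 * μ (⋃ k, D k ∩ H k) := by
        rw [measure_iUnion
          (fun i j hij => (hDdisj hij).mono Set.inter_subset_left Set.inter_subset_left)
          (fun k => (hDamb k).inter (hHamb k))]
    _ ≤ 2 * μ (devSet (fun n ω => Z (n, false) ω - Z (n, true) ω) (a / 2) N) := by
        refine mul_le_mul_right (measure_mono ?_) _
        exact Set.iUnion_subset hDHsub

end Main

set_option maxHeartbeats 1000000 in
/-- `Z (n, false)` plays the role of `X_n` and `Z (n, true)` the role of `X'_n`, an
independent copy of the sequence; `X*_n := X_n - X'_n` is the symmetrized sequence. -/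
theorem stmt11 {Ω : Type*} [MeasurableSpace Ω] (μ : Measure Ω) [IsProbabilityMeasure μ]
    (X : Ω → ℝ) (Z : ℕ × Bool → Ω → ℝ)
    (hX : Measurable X) (hZ : ∀ p, Measurable (Z p))
    (hindep : iIndepFun Z μ)
    (hident : ∀ p, IdentDistrib (Z p) X μ μ)
    (hint : Integrable X μ) (hcent : μ[X] = 0)
    (G : ℝ → ℝ) (hG : Moderate G) :
    (∀ a > (0 : ℝ), (∀ᵐ ω ∂μ, lastDev (fun n => Z (n, false)) a ω ≠ ⊤) ∧
        ∫⁻ ω, evalG G (lastDev (fun n => Z (n, false)) a ω) ∂μ < ⊤) ↔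
      (∀ a > (0 : ℝ),
        (∀ᵐ ω ∂μ, lastDev (fun n ω' => Z (n, false) ω' - Z (n, true) ω') a ω ≠ ⊤) ∧
        ∫⁻ ω, evalG G (lastDev (fun n ω' => Z (n, false) ω' - Z (n, true) ω') a ω) ∂μ
          < ⊤) := by
  obtain ⟨hpos, hmono, hGtop, hmod⟩ := hG
  have hYf : ∀ n : ℕ, Measurable ((fun n => Z (n, false)) n) := fun n => hZ _
  have hYs : ∀ n : ℕ,
      Measurable ((fun n ω' => Z (n, false) ω' - Z (n, true) ω') n) :=
    fun n => (hZ _).sub (hZ _)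
  constructor
  · intro h a ha
    rw [cond_iff_phi hmono hGtop hYs a]
    have hf := (cond_iff_phi hmono hGtop hYf (a / 2)).1 (h (a / 2) (by linarith))
    have hcomp : ∀ k : ℕ,
        μ (devSet (fun n ω' => Z (n, false) ω' - Z (n, true) ω') a (k + 1))
          ≤ 2 * μ (devSet (fun n => Z (n, false)) (a / 2) (k + 1)) := by
      intro k
      calc μ (devSet (fun n ω' => Z (n, false) ω' - Z (n, true) ω') a (k + 1))
          ≤ μ (devSet (fun n => Z (n, false)) (a / 2) (k + 1)
              ∪ devSet (fun n => Z (n, true)) (a / 2) (k + 1)) :=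
            measure_mono (devSet_subset_union _ _ a (k + 1))
        _ ≤ μ (devSet (fun n => Z (n, false)) (a / 2) (k + 1))
              + μ (devSet (fun n => Z (n, true)) (a / 2) (k + 1)) := measure_union_le _ _
        _ = 2 * μ (devSet (fun n => Z (n, false)) (a / 2) (k + 1)) := by
            rw [devSet_transfer hX hZ hindep hident (a / 2) (k + 1), two_mul]
    calc ∑' k : ℕ, dE G k * μ (devSet (fun n ω' => Z (n, false) ω' - Z (n, true) ω') a (k + 1))
        ≤ ∑' k : ℕ, dE G k * (2 * μ (devSet (fun n => Z (n, false)) (a / 2) (k + 1))) :=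
          ENNReal.tsum_le_tsum fun k => mul_le_mul_right (hcomp k) _
      _ = 2 * ∑' k : ℕ, dE G k * μ (devSet (fun n => Z (n, false)) (a / 2) (k + 1)) := by
          rw [← ENNReal.tsum_mul_left]
          exact tsum_congr fun k => by ring
      _ < ⊤ := ENNReal.mul_lt_top (by norm_num) hf
  · intro h a ha
    rw [cond_iff_phi hmono hGtop hYf a]
    have hs := (cond_iff_phi hmono hGtop hYs (a / 2)).1 (h (a / 2) (by linarith))
    obtain ⟨N₀, hN₀1, hsym⟩ := sym_bound hX hZ hindep hident hint hcent ha
    rw [← Summable.sum_add_tsum_nat_add' (f := fun k : ℕ =>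
      dE G k * μ (devSet (fun n => Z (n, false)) a (k + 1))) (k := N₀) ENNReal.summable]
    refine ENNReal.add_lt_top.2 ⟨?_, ?_⟩
    · refine ENNReal.sum_lt_top.2 fun k _ => ?_
      have hle : dE G k * μ (devSet (fun n => Z (n, false)) a (k + 1)) ≤ gE G (k + 1) := by
        calc dE G k * μ (devSet (fun n => Z (n, false)) a (k + 1))
            ≤ dE G k * 1 := mul_le_mul_right prob_le_one _
          _ = dE G k := mul_one _
          _ ≤ gE G (k + 1) := tsub_le_self
      exact lt_of_le_of_lt hle (lt_of_le_of_ne le_top (gE_ne_top G (k + 1)))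
    · have hbound : ∀ i : ℕ,
          dE G (i + N₀) * μ (devSet (fun n => Z (n, false)) a (i + N₀ + 1))
            ≤ 2 * (dE G (i + N₀)
                * μ (devSet (fun n ω' => Z (n, false) ω' - Z (n, true) ω') (a / 2)
                    (i + N₀ + 1))) := by
        intro i
        calc dE G (i + N₀) * μ (devSet (fun n => Z (n, false)) a (i + N₀ + 1))
            ≤ dE G (i + N₀) * (2 * μ (devSet (fun n ω' => Z (n, false) ω' - Z (n, true) ω')
                (a / 2) (i + N₀ + 1))) :=
              mul_le_mul_right (hsym (i + N₀ + 1) (by omega)) _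
          _ = 2 * (dE G (i + N₀) * μ (devSet (fun n ω' => Z (n, false) ω' - Z (n, true) ω')
                (a / 2) (i + N₀ + 1))) := by ring
      calc ∑' i : ℕ, dE G (i + N₀) * μ (devSet (fun n => Z (n, false)) a (i + N₀ + 1))
          ≤ ∑' i : ℕ, 2 * (dE G (i + N₀)
              * μ (devSet (fun n ω' => Z (n, false) ω' - Z (n, true) ω') (a / 2)
                  (i + N₀ + 1))) := ENNReal.tsum_le_tsum hbound
        _ = 2 * ∑' i : ℕ, dE G (i + N₀)
              * μ (devSet (fun n ω' => Z (n, false) ω' - Z (n, true) ω') (a / 2)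
                  (i + N₀ + 1)) := ENNReal.tsum_mul_left
        _ ≤ 2 * ∑' k : ℕ, dE G k
              * μ (devSet (fun n ω' => Z (n, false) ω' - Z (n, true) ω') (a / 2) (k + 1)) := by
            refine mul_le_mul_right ?_ _
            exact ENNReal.tsum_comp_le_tsum_of_injective
              (add_left_injective N₀) _
        _ < ⊤ := ENNReal.mul_lt_top (by norm_num) hs
end

section
/- Let X and (X_n)_{n≥1} be i.i.d. real random variables, let σ_n := Σ_{k≥n} P[|X| ≥ k] (assumed finite), and let E_n := {∃ k ≥ n : |X_k| ≥ k}. Then σ_n·(1 − σ_{n+1}) ≤ P[E_n] ≤ σ_n for every n ≥ 1. -/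
open MeasureTheory ProbabilityTheory ENNReal

theorem stmt12 {Ω : Type*} [MeasurableSpace Ω] (μ : Measure Ω) [IsProbabilityMeasure μ]
    (X : Ω → ℝ) (Xs : ℕ → Ω → ℝ)
    (hX : Measurable X) (hXs : ∀ n, Measurable (Xs n))
    (hindep : iIndepFun Xs μ)
    (hident : ∀ n, IdentDistrib (Xs n) X μ μ)
    (σ : ℕ → ℝ≥0∞)
    (hσ : ∀ n, σ n = ∑' k : {k : ℕ // n ≤ k}, μ {ω | ((k : ℕ) : ℝ) ≤ |X ω|})
    (hfin : ∀ n, 1 ≤ n → σ n ≠ ⊤) :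
    ∀ n : ℕ, 1 ≤ n →
      σ n * (1 - σ (n + 1)) ≤ μ {ω | ∃ k, n ≤ k ∧ (k : ℝ) ≤ |Xs k ω|} ∧
      μ {ω | ∃ k, n ≤ k ∧ (k : ℝ) ≤ |Xs k ω|} ≤ σ n := by
  -- target sets
  set T : ℕ → Set ℝ := fun k => {x | (k : ℝ) ≤ |x|} with hT
  have hTmeas : ∀ k, MeasurableSet (T k) := fun k =>
    measurableSet_le measurable_const continuous_abs.measurable
  set A : ℕ → Set Ω := fun k => Xs k ⁻¹' T k with hA
  have hAmeas : ∀ k, MeasurableSet (A k) := fun k => (hXs k) (hTmeas k)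
  set p : ℕ → ℝ≥0∞ := fun k => μ (A k) with hp
  have hpX : ∀ k, p k = μ {ω | (k : ℝ) ≤ |X ω|} := fun k =>
    (hident k).measure_mem_eq (hTmeas k)
  have hσ' : ∀ m, σ m = ∑' k : {k : ℕ // m ≤ k}, p (k : ℕ) := by
    intro m; rw [hσ m]; exact tsum_congr fun k => (hpX k).symm
  -- monotonicity of σ
  have hσmono : ∀ m l : ℕ, m ≤ l → σ l ≤ σ m := by
    intro m l hml
    rw [hσ' m, hσ' l]
    exact Summable.tsum_le_tsum_of_inj (fun k => ⟨k.1, le_trans hml k.2⟩)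
      (fun a b hab => Subtype.ext (by simpa using congrArg Subtype.val hab))
      (fun _ _ => zero_le) (fun _ => le_rfl) ENNReal.summable ENNReal.summable
  -- pairwise independence
  have hpair : ∀ j k : ℕ, j ≠ k → μ (A j ∩ A k) = p j * p k := by
    intro j k hjk
    exact (hindep.indepFun hjk).measure_inter_preimage_eq_mul (T j) (T k)
      (hTmeas j) (hTmeas k)
  intro n hn
  have hE : {ω | ∃ k, n ≤ k ∧ (k : ℝ) ≤ |Xs k ω|} = ⋃ k : {k : ℕ // n ≤ k}, A (k : ℕ) := by
    ext ω
    simp only [Set.mem_setOf_eq, Set.mem_iUnion, Subtype.exists, exists_prop]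
    rfl
  constructor
  · -- lower bound
    set D : ℕ → Set Ω := fun k => A k \ ⋃ j : {j : ℕ // k + 1 ≤ j}, A (j : ℕ) with hD
    have hDmeas : ∀ k, MeasurableSet (D k) :=
      fun k => (hAmeas k).diff (MeasurableSet.iUnion fun j => hAmeas j)
    have hDsub : ∀ k, D k ⊆ A k := fun k => Set.diff_subset
    have hDdisj : ∀ k l : ℕ, k < l → Disjoint (D k) (D l) := by
      intro k l hkl
      refine Set.disjoint_left.2 fun ω hωk hωl => ?_
      exact hωk.2 (Set.mem_iUnion.2 ⟨⟨l, hkl⟩, hωl.1⟩)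
    -- μ (D k) ≥ p k - p k * σ (n+1) for k ≥ n
    have hDlow : ∀ k : ℕ, n ≤ k → p k - p k * σ (n + 1) ≤ μ (D k) := by
      intro k hk
      rw [tsub_le_iff_right]
      have h1 : A k ⊆ D k ∪ (⋃ j : {j : ℕ // k + 1 ≤ j}, A k ∩ A (j : ℕ)) := by
        intro ω hω
        by_cases hmem : ω ∈ ⋃ j : {j : ℕ // k + 1 ≤ j}, A (j : ℕ)
        · obtain ⟨j, hj⟩ := Set.mem_iUnion.1 hmem
          exact Or.inr (Set.mem_iUnion.2 ⟨j, ⟨hω, hj⟩⟩)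
        · exact Or.inl ⟨hω, hmem⟩
      calc p k ≤ μ (D k) + μ (⋃ j : {j : ℕ // k + 1 ≤ j}, A k ∩ A (j : ℕ)) :=
            le_trans (measure_mono h1) (measure_union_le _ _)
        _ ≤ μ (D k) + p k * σ (n + 1) := by
            gcongr
            calc μ (⋃ j : {j : ℕ // k + 1 ≤ j}, A k ∩ A (j : ℕ))
                ≤ ∑' j : {j : ℕ // k + 1 ≤ j}, μ (A k ∩ A (j : ℕ)) := measure_iUnion_le _
              _ = ∑' j : {j : ℕ // k + 1 ≤ j}, p k * p (j : ℕ) := by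
                  refine tsum_congr fun j => hpair k j ?_
                  have := j.2; omega
              _ = p k * σ (k + 1) := by rw [hσ' (k + 1), ENNReal.tsum_mul_left]
              _ ≤ p k * σ (n + 1) := by
                  gcongr
                  exact hσmono _ _ (by omega)
    -- sum up
    have hμD : μ (⋃ k : {k : ℕ // n ≤ k}, D (k : ℕ)) = ∑' k : {k : ℕ // n ≤ k}, μ (D (k : ℕ)) := by
      refine measure_iUnion ?_ fun k => hDmeas _
      intro a b hab
      rcases lt_or_gt_of_ne (fun h => hab (Subtype.ext h)) with h | h
      · exact hDdisj _ _ h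
      · exact (hDdisj _ _ h).symm
    have hsub : (⋃ k : {k : ℕ // n ≤ k}, D (k : ℕ)) ⊆ ⋃ k : {k : ℕ // n ≤ k}, A (k : ℕ) :=
      Set.iUnion_mono fun k => hDsub _
    calc σ n * (1 - σ (n + 1))
        = ∑' k : {k : ℕ // n ≤ k}, p (k : ℕ) * (1 - σ (n + 1)) := by
          rw [hσ' n, ENNReal.tsum_mul_right]
      _ ≤ ∑' k : {k : ℕ // n ≤ k}, μ (D (k : ℕ)) := by
          refine ENNReal.tsum_le_tsum fun k => ?_
          refine le_trans ?_ (hDlow k k.2)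
          rw [mul_comm, ENNReal.sub_mul (fun _ _ => measure_ne_top μ _), one_mul, mul_comm]
      _ = μ (⋃ k : {k : ℕ // n ≤ k}, D (k : ℕ)) := hμD.symm
      _ ≤ μ {ω | ∃ k, n ≤ k ∧ (k : ℝ) ≤ |Xs k ω|} := by
          rw [hE]; exact measure_mono hsub
  · -- upper bound
    rw [hE, hσ' n]
    exact measure_iUnion_le _
end

section
/- Let (X_n)_{n≥1} be i.i.d. symmetric real random variables with partial sums S_n := X_1 + ⋯ + X_n. Then for every integer i ≥ 0, P[ max_{2^i ≤ n < 2^{i+1}} |S_n| ≥ 2^i ] ≤ 3·P[ |S_{2^{i+1}}| ≥ 2^{i-1} ]. -/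
open MeasureTheory ProbabilityTheory ENNReal

/-- partial sum of the first `k` coordinates of a point of `ℝ^N`. -/
noncomputable def pss (N k : ℕ) (x : Fin N → ℝ) : ℝ :=
  ∑ j ∈ Finset.range k, if h : j < N then x ⟨j, h⟩ else 0

/-- negate the coordinates with index `≥ n`. -/
def negFrom (N n : ℕ) (x : Fin N → ℝ) : Fin N → ℝ :=
  fun j => if (j : ℕ) < n then x j else -x j

lemma measurable_pss (N k : ℕ) : Measurable (pss N k) := by
  unfold pss
  refine Finset.measurable_sum _ fun j _ => ?_
  by_cases h : j < N
  · simpa [h] using measurable_pi_apply (⟨j, h⟩ : Fin N)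
  · simp only [dif_neg h]; exact measurable_const

lemma pss_comp {Ω : Type*} (Xs : ℕ → Ω → ℝ) (N k : ℕ) (h : k ≤ N) (ω : Ω) :
    pss N k (fun j => Xs (j : ℕ) ω) = partialSum Xs k ω := by
  unfold pss partialSum
  refine Finset.sum_congr rfl fun j hj => ?_
  have hj' : j < N := lt_of_lt_of_le (Finset.mem_range.mp hj) h
  simp [hj']

lemma pss_negFrom_le {N n m : ℕ} (h : m ≤ n) (x : Fin N → ℝ) :
    pss N m (negFrom N n x) = pss N m x := by
  unfold pss negFrom
  refine Finset.sum_congr rfl fun j hj => ?_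
  have hjm : j < m := Finset.mem_range.mp hj
  by_cases hjN : j < N
  · simp [hjN, lt_of_lt_of_le hjm h]
  · simp [hjN]

lemma pss_negFrom_top {N n : ℕ} (h : n ≤ N) (x : Fin N → ℝ) :
    pss N N (negFrom N n x) = 2 * pss N n x - pss N N x := by
  have key : pss N N (negFrom N n x) + pss N N x = 2 * pss N n x := by
    unfold pss negFrom
    rw [← Finset.sum_add_distrib, Finset.mul_sum]
    have h1 : ∀ j ∈ Finset.range N,
        ((if hj : j < N then (if ((⟨j, hj⟩ : Fin N) : ℕ) < n then x ⟨j, hj⟩ else -x ⟨j, hj⟩) else 0)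
            + (if hj : j < N then x ⟨j, hj⟩ else 0))
          = if j < n then 2 * (if hj : j < N then x ⟨j, hj⟩ else 0) else 0 := by
      intro j hj
      have hjN : j < N := Finset.mem_range.mp hj
      by_cases hjn : j < n
      · simp only [dif_pos hjN, if_pos hjn]; ring
      · simp only [dif_pos hjN, if_neg hjn]; ring
    rw [Finset.sum_congr rfl h1]
    rw [← Finset.sum_subset (Finset.range_subset_range.mpr h)
      (fun j _ hj => if_neg (by simpa using hj))]
    exact Finset.sum_congr rfl fun j hj => if_pos (Finset.mem_range.mp hj)
  linarith

lemma measurable_negFrom (N n : ℕ) : Measurable (negFrom N n) := by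
  unfold negFrom
  refine measurable_pi_lambda _ fun j => ?_
  by_cases hj : (j : ℕ) < n
  · simp only [if_pos hj]
    exact measurable_pi_apply j
  · simp only [if_neg hj]
    exact (measurable_pi_apply j).neg

lemma measurePreserving_negFrom {ν : Measure ℝ} [IsProbabilityMeasure ν]
    (hν : ν.map (fun t : ℝ => -t) = ν) (N n : ℕ) :
    MeasurePreserving (negFrom N n)
      (Measure.pi fun _ : Fin N => ν) (Measure.pi fun _ : Fin N => ν) := by
  have h := measurePreserving_pi (fun _ : Fin N => ν) (fun _ : Fin N => ν)
    (f := fun (j : Fin N) (t : ℝ) => if (j : ℕ) < n then t else -t) (fun j => ?_)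
  · exact h
  · by_cases hj : (j : ℕ) < n
    · simp only [if_pos hj]; exact MeasurePreserving.id ν
    · simpa [hj] using (⟨measurable_neg, hν⟩ : MeasurePreserving (fun t : ℝ => -t) ν ν)

theorem stmt14 {Ω : Type*} [MeasurableSpace Ω] (μ : Measure Ω) [IsProbabilityMeasure μ]
    (X : Ω → ℝ) (Xs : ℕ → Ω → ℝ)
    (hX : Measurable X) (hXs : ∀ n, Measurable (Xs n))
    (hindep : iIndepFun Xs μ)
    (hident : ∀ n, IdentDistrib (Xs n) X μ μ)
    (hsymm : Measure.map X μ = Measure.map (fun ω => -X ω) μ) :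
    ∀ i : ℕ,
      μ {ω | ∃ n : ℕ, 2 ^ i ≤ n ∧ n < 2 ^ (i + 1) ∧
          ((2 : ℝ) ^ i ≤ |partialSum Xs n ω|)} ≤
        3 * μ {ω | (2 : ℝ) ^ i / 2 ≤ |partialSum Xs (2 ^ (i + 1)) ω|} := by
  classical
  intro i
  set n₀ : ℕ := 2 ^ i with hn₀def
  set N : ℕ := 2 ^ (i + 1) with hNdef
  set a : ℝ := 2 ^ i with hadef
  have ha0 : (0 : ℝ) < a := by positivity
  -- laws
  set ν : Measure ℝ := μ.map X with hνdef
  haveI hνprob : IsProbabilityMeasure ν := Measure.isProbabilityMeasure_map hX.aemeasurable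
  have hmarg : ∀ n : ℕ, μ.map (Xs n) = ν := fun n => (hident n).map_eq
  have hνsymm : ν.map (fun t : ℝ => -t) = ν := by
    rw [hνdef, Measure.map_map measurable_neg hX]
    exact hsymm.symm
  -- the joint law is the product measure
  set Φ : Ω → (Fin N → ℝ) := fun ω j => Xs (j : ℕ) ω with hΦdef
  have hΦm : Measurable Φ := measurable_pi_lambda _ fun j => hXs j
  set π : Measure (Fin N → ℝ) := Measure.pi (fun _ : Fin N => ν) with hπdef
  have hmap : μ.map Φ = π := by
    refine (Measure.pi_eq fun s hs => ?_).symm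
    rw [Measure.map_apply hΦm (MeasurableSet.univ_pi hs)]
    set sets : ℕ → Set ℝ := fun k => if h : k < N then s ⟨k, h⟩ else Set.univ with hsets
    have hsetsm : ∀ k, k ∈ Finset.range N → MeasurableSet (sets k) := by
      intro k _
      by_cases h : k < N <;> simp [hsets, h, hs]
    have h1 : Φ ⁻¹' Set.pi Set.univ s = ⋂ k ∈ Finset.range N, Xs k ⁻¹' sets k := by
      ext ω
      simp only [Set.mem_preimage, Set.mem_pi, Set.mem_univ, forall_true_left,
        Set.mem_iInter, Finset.mem_range, hΦdef, hsets]
      constructor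
      · intro h k hk
        simp only [Set.mem_preimage, dif_pos hk]
        exact h ⟨k, hk⟩
      · intro h j
        have := h (j : ℕ) j.isLt
        simpa [j.isLt] using this
    rw [h1, hindep.measure_inter_preimage_eq_mul _ hsetsm,
      ← Fin.prod_univ_eq_prod_range (fun k => μ (Xs k ⁻¹' sets k)) N]
    refine Finset.prod_congr rfl fun j _ => ?_
    have hsj : sets (j : ℕ) = s j := by simp [hsets, j.isLt]
    rw [hsj, ← hmarg (j : ℕ), Measure.map_apply (hXs (j : ℕ)) (hs j)]
  -- measurability of partial sums
  have hPSm : ∀ k, Measurable (partialSum Xs k) := by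
    intro k; unfold partialSum
    exact Finset.measurable_sum _ fun j _ => hXs j
  -- events
  set A : Set Ω := {ω | a / 2 ≤ |partialSum Xs N ω|} with hAdef
  have hAm : MeasurableSet A := measurableSet_le measurable_const (hPSm N).abs
  set E : ℕ → Set Ω := fun n =>
    {ω | a ≤ |partialSum Xs n ω|} ∩ ⋂ m ∈ Finset.Ico n₀ n, {ω | |partialSum Xs m ω| < a}
    with hEdef
  have hEm : ∀ n, MeasurableSet (E n) := by
    intro n
    refine (measurableSet_le measurable_const (hPSm n).abs).inter ?_
    exact MeasurableSet.biInter (Finset.Ico n₀ n).countable_toSet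
      fun m _ => measurableSet_lt (hPSm m).abs measurable_const
  have hEmem : ∀ n ω, ω ∈ E n ↔
      (a ≤ |partialSum Xs n ω| ∧ ∀ m, n₀ ≤ m → m < n → |partialSum Xs m ω| < a) := by
    intro n ω
    simp [hEdef, Set.mem_iInter, Finset.mem_Ico, and_imp]
  -- the target set is the disjoint union of the E n
  have hU : {ω | ∃ n : ℕ, n₀ ≤ n ∧ n < N ∧ (a ≤ |partialSum Xs n ω|)} =
      ⋃ n ∈ Finset.Ico n₀ N, E n := by
    ext ω
    simp only [Set.mem_setOf_eq, Set.mem_iUnion, Finset.mem_Ico, exists_prop]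
    constructor
    · intro h
      have hne : ∃ n, n₀ ≤ n ∧ n < N ∧ a ≤ |partialSum Xs n ω| := h
      set n := Nat.find hne with hn
      obtain ⟨h1, h2, h3⟩ := Nat.find_spec hne
      refine ⟨n, ⟨h1, h2⟩, (hEmem n ω).mpr ⟨h3, fun m hm1 hm2 => ?_⟩⟩
      by_contra hcon
      push_neg at hcon
      exact Nat.find_min hne hm2 ⟨hm1, lt_trans hm2 h2, hcon⟩
    · rintro ⟨n, ⟨h1, h2⟩, hn⟩
      exact ⟨n, h1, h2, ((hEmem n ω).mp hn).1⟩
  have hdisj : Set.PairwiseDisjoint (↑(Finset.Ico n₀ N)) E := by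
    intro m hm n hn hmn
    simp only [Finset.coe_Ico, Set.mem_Ico] at hm hn
    rcases lt_or_gt_of_ne hmn with h | h
    · refine Set.disjoint_left.mpr fun ω hω1 hω2 => ?_
      have := ((hEmem n ω).mp hω2).2 m hm.1 h
      exact absurd ((hEmem m ω).mp hω1).1 (not_le.mpr this)
    · refine Set.disjoint_left.mpr fun ω hω1 hω2 => ?_
      have := ((hEmem m ω).mp hω1).2 n hn.1 h
      exact absurd ((hEmem n ω).mp hω2).1 (not_le.mpr this)
  -- key per-n reflection inequality
  have hkey : ∀ n, n₀ ≤ n → n < N → μ (E n) ≤ 2 * μ (E n ∩ A) := by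
    intro n hn1 hn2
    have hnN : n ≤ N := le_of_lt hn2
    set C : Set (Fin N → ℝ) :=
      {x | a ≤ |pss N n x|} ∩ ⋂ m ∈ Finset.Ico n₀ n, {x | |pss N m x| < a} with hCdef
    have hCmem : ∀ x, x ∈ C ↔
        (a ≤ |pss N n x| ∧ ∀ m, n₀ ≤ m → m < n → |pss N m x| < a) := by
      intro x
      simp [hCdef, Set.mem_iInter, Finset.mem_Ico, and_imp]
    have hCm : MeasurableSet C := by
      refine (measurableSet_le measurable_const (measurable_pss N n).abs).inter ?_
      exact MeasurableSet.biInter (Finset.Ico n₀ n).countable_toSet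
        fun m _ => measurableSet_lt (measurable_pss N m).abs measurable_const
    set Bp : Set (Fin N → ℝ) := C ∩ {x | a / 2 ≤ |pss N N x|} with hBpdef
    set Bm : Set (Fin N → ℝ) := C ∩ {x | a / 2 ≤ |2 * pss N n x - pss N N x|} with hBmdef
    have hBpm : MeasurableSet Bp :=
      hCm.inter (measurableSet_le measurable_const (measurable_pss N N).abs)
    have hBmm : MeasurableSet Bm :=
      hCm.inter (measurableSet_le measurable_const
        (((measurable_pss N n).const_mul 2).sub (measurable_pss N N)).abs)
    -- C ⊆ Bp ∪ Bm
    have hCsub : C ⊆ Bp ∪ Bm := by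
      intro x hx
      have h1 : a ≤ |pss N n x| := ((hCmem x).mp hx).1
      by_contra hcon
      simp only [Set.mem_union, hBpdef, hBmdef, Set.mem_inter_iff, Set.mem_setOf_eq,
        not_or, not_and] at hcon
      have h2 : ¬ a / 2 ≤ |pss N N x| := hcon.1 hx
      have h3 : ¬ a / 2 ≤ |2 * pss N n x - pss N N x| := hcon.2 hx
      push_neg at h2 h3
      have h4 : |2 * pss N n x| - |pss N N x| ≤ |2 * pss N n x - pss N N x| :=
        abs_sub_abs_le_abs_sub _ _
      have h5 : |2 * pss N n x| = 2 * |pss N n x| := by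
        rw [abs_mul]; norm_num
      linarith
    -- negFrom maps Bp to Bm
    have hpre : negFrom N n ⁻¹' Bp = Bm := by
      ext x
      simp only [Set.mem_preimage, hBpdef, hBmdef, Set.mem_inter_iff, Set.mem_setOf_eq]
      have hC' : negFrom N n x ∈ C ↔ x ∈ C := by
        rw [hCmem, hCmem, pss_negFrom_le (le_refl n)]
        constructor
        · rintro ⟨u, v⟩
          exact ⟨u, fun m hm1 hm2 => by
            have := v m hm1 hm2
            rwa [pss_negFrom_le (le_of_lt hm2)] at this⟩
        · rintro ⟨u, v⟩
          exact ⟨u, fun m hm1 hm2 => by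
            rw [pss_negFrom_le (le_of_lt hm2)]
            exact v m hm1 hm2⟩
      rw [hC', pss_negFrom_top hnN]
    have hmp := measurePreserving_negFrom hνsymm N n
    have hBeq : π Bm = π Bp := by
      rw [← hpre, hmp.measure_preimage hBpm.nullMeasurableSet]
    -- pull back to Ω
    have hpullC : Φ ⁻¹' C = E n := by
      ext ω
      rw [Set.mem_preimage, hCmem, hEmem]
      simp only [hΦdef]
      rw [pss_comp Xs N n hnN]
      constructor
      · rintro ⟨u, v⟩
        exact ⟨u, fun m hm1 hm2 => by
          have := v m hm1 hm2
          rwa [pss_comp Xs N m (le_trans (le_of_lt hm2) hnN)] at this⟩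
      · rintro ⟨u, v⟩
        exact ⟨u, fun m hm1 hm2 => by
          rw [pss_comp Xs N m (le_trans (le_of_lt hm2) hnN)]
          exact v m hm1 hm2⟩
    have hpullBp : Φ ⁻¹' Bp = E n ∩ A := by
      rw [hBpdef, Set.preimage_inter, hpullC]
      congr 1
      ext ω
      simp only [Set.mem_preimage, Set.mem_setOf_eq, hΦdef, hAdef]
      rw [pss_comp Xs N N (le_refl N)]
    have e1 : μ (E n) = π C := by
      rw [← hpullC, ← Measure.map_apply hΦm hCm, hmap]
    have e2 : μ (E n ∩ A) = π Bp := by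
      rw [← hpullBp, ← Measure.map_apply hΦm hBpm, hmap]
    calc μ (E n) = π C := e1
      _ ≤ π (Bp ∪ Bm) := measure_mono hCsub
      _ ≤ π Bp + π Bm := measure_union_le _ _
      _ = 2 * π Bp := by rw [hBeq, two_mul]
      _ = 2 * μ (E n ∩ A) := by rw [e2]
  -- put everything together
  rw [hU, measure_biUnion_finset hdisj fun n _ => hEm n]
  have step1 : ∑ n ∈ Finset.Ico n₀ N, μ (E n) ≤
      ∑ n ∈ Finset.Ico n₀ N, 2 * μ (E n ∩ A) := by
    refine Finset.sum_le_sum fun n hn => ?_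
    rw [Finset.mem_Ico] at hn
    exact hkey n hn.1 hn.2
  have step2 : ∑ n ∈ Finset.Ico n₀ N, 2 * μ (E n ∩ A) =
      2 * μ (⋃ n ∈ Finset.Ico n₀ N, (E n ∩ A)) := by
    rw [← Finset.mul_sum]
    congr 1
    rw [measure_biUnion_finset (hdisj.mono_on fun n _ => Set.inter_subset_left)
      fun n _ => (hEm n).inter hAm]
  have step3 : μ (⋃ n ∈ Finset.Ico n₀ N, (E n ∩ A)) ≤ μ A := by
    refine measure_mono ?_
    simp only [Set.iUnion_subset_iff]
    exact fun n _ => Set.inter_subset_right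
  calc ∑ n ∈ Finset.Ico n₀ N, μ (E n)
      ≤ 2 * μ (⋃ n ∈ Finset.Ico n₀ N, (E n ∩ A)) := step1.trans step2.le
    _ ≤ 2 * μ A := by exact mul_le_mul_right step3 2
    _ ≤ 3 * μ A := by
        exact mul_le_mul_left (by norm_num : (2 : ℝ≥0∞) ≤ 3) _
end

section
/- Let G : [0,∞) → (0,∞) be non-decreasing and let (X_n)_{n≥1} be i.i.d. symmetric real random variables with partial sums S_n. Then Σ_{i≥0} G(2^i)·P[|S_{2^i}| ≥ 2^i/4] ≤ 4·Σ_{n≥1} n^{-1}·G(n)·P[|S_n| ≥ n/8] (both sides possibly infinite). -/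
open MeasureTheory ProbabilityTheory ENNReal

section helpers
variable {Ω : Type*} [MeasurableSpace Ω] {μ : Measure Ω}

lemma indep_sum_sum [IsProbabilityMeasure μ] {Xs : ℕ → Ω → ℝ} (hXs : ∀ n, Measurable (Xs n))
    (hindep : iIndepFun Xs μ) (S T : Finset ℕ) (hST : Disjoint S T) :
    IndepFun (fun ω => ∑ i ∈ S, Xs i ω) (fun ω => ∑ i ∈ T, Xs i ω) μ := by
  have h := hindep.indepFun_finset S T hST hXs
  have h2 := h.comp (φ := fun v : ({x // x ∈ S} → ℝ) => ∑ i, v i)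
    (ψ := fun v : ({x // x ∈ T} → ℝ) => ∑ i, v i)
    (Finset.univ.measurable_sum fun i _ => measurable_pi_apply i)
    (Finset.univ.measurable_sum fun i _ => measurable_pi_apply i)
  have e1 : ((fun v : ({x // x ∈ S} → ℝ) => ∑ i, v i) ∘ (fun a (i : S) => Xs i a))
      = fun ω => ∑ i ∈ S, Xs i ω := by
    funext ω; exact Finset.sum_coe_sort S (fun i => Xs i ω)
  have e2 : ((fun v : ({x // x ∈ T} → ℝ) => ∑ i, v i) ∘ (fun a (i : T) => Xs i a))
      = fun ω => ∑ i ∈ T, Xs i ω := by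
    funext ω; exact Finset.sum_coe_sort T (fun i => Xs i ω)
  rwa [e1, e2] at h2

lemma map_add_symm [IsProbabilityMeasure μ] {f g : Ω → ℝ}
    (hf : Measurable f) (hg : Measurable g) (hind : IndepFun f g μ)
    (hfs : μ.map f = μ.map (fun ω => -f ω)) (hgs : μ.map g = μ.map (fun ω => -g ω)) :
    μ.map (fun ω => f ω + g ω) = μ.map (fun ω => -(f ω + g ω)) := by
  have hindn : IndepFun (fun ω => -f ω) (fun ω => -g ω) μ :=
    hind.comp measurable_neg measurable_neg
  have h1 : μ.map (fun ω => (f ω, g ω)) = (μ.map f).prod (μ.map g) :=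
    (indepFun_iff_map_prod_eq_prod_map_map hf.aemeasurable hg.aemeasurable).1 hind
  have h2 : μ.map (fun ω => (-f ω, -g ω))
      = (μ.map (fun ω => -f ω)).prod (μ.map (fun ω => -g ω)) :=
    (indepFun_iff_map_prod_eq_prod_map_map hf.neg.aemeasurable hg.neg.aemeasurable).1 hindn
  calc μ.map (fun ω => f ω + g ω)
      = Measure.map (fun p : ℝ × ℝ => p.1 + p.2) (μ.map (fun ω => (f ω, g ω))) := by
        rw [Measure.map_map measurable_add (hf.prodMk hg)]; rfl
    _ = Measure.map (fun p : ℝ × ℝ => p.1 + p.2) (μ.map (fun ω => (-f ω, -g ω))) := by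
        rw [h1, h2, ← hfs, ← hgs]
    _ = μ.map (fun ω => -(f ω + g ω)) := by
        rw [Measure.map_map (f := fun ω => (-f ω, -g ω)) measurable_add (hf.neg.prodMk hg.neg)]
        congr 1; funext ω; show -f ω + -g ω = -(f ω + g ω); ring

lemma finsetSum_symm [IsProbabilityMeasure μ] {Xs : ℕ → Ω → ℝ} (hXs : ∀ n, Measurable (Xs n))
    (hindep : iIndepFun Xs μ)
    (hsym : ∀ n, μ.map (Xs n) = μ.map (fun ω => -(Xs n ω))) (s : Finset ℕ) :
    μ.map (fun ω => ∑ i ∈ s, Xs i ω) = μ.map (fun ω => -∑ i ∈ s, Xs i ω) := by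
  classical
  induction s using Finset.induction with
  | empty => simp
  | @insert a s ha ih =>
    have hind : IndepFun (Xs a) (fun ω => ∑ i ∈ s, Xs i ω) μ := by
      have := indep_sum_sum hXs hindep {a} s (by simpa using ha)
      simpa using this
    have h := map_add_symm (hXs a) (s.measurable_sum fun i _ => hXs i) hind (hsym a) ih
    have e : ∀ ω, ∑ i ∈ insert a s, Xs i ω = Xs a ω + ∑ i ∈ s, Xs i ω :=
      fun ω => Finset.sum_insert ha
    simp only [e]
    exact h

lemma half_ineq [IsProbabilityMeasure μ] {S D : Ω → ℝ}
    (hS : Measurable S) (hD : Measurable D) (hind : IndepFun S D μ)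
    (hDs : μ.map D = μ.map (fun ω => -D ω)) (t : ℝ) :
    μ {ω | t ≤ |S ω|} ≤ 2 * μ {ω | t ≤ |S ω + D ω|} := by
  set E : Set (ℝ × ℝ) := {p | t ≤ |p.1| ∧ 0 ≤ p.1 * p.2} with hE
  have hEm : MeasurableSet E := by
    apply MeasurableSet.inter
    · exact measurableSet_le measurable_const measurable_fst.abs
    · exact measurableSet_le measurable_const (measurable_fst.mul measurable_snd)
  have hindn : IndepFun S (fun ω => -D ω) μ := hind.comp measurable_id measurable_neg
  have h1 : μ.map (fun ω => (S ω, D ω)) = (μ.map S).prod (μ.map D) :=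
    (indepFun_iff_map_prod_eq_prod_map_map hS.aemeasurable hD.aemeasurable).1 hind
  have h2 : μ.map (fun ω => (S ω, -D ω)) = (μ.map S).prod (μ.map (fun ω => -D ω)) :=
    (indepFun_iff_map_prod_eq_prod_map_map hS.aemeasurable hD.neg.aemeasurable).1 hindn
  have hmaps : μ.map (fun ω => (S ω, D ω)) = μ.map (fun ω => (S ω, -D ω)) := by
    rw [h1, h2, hDs]
  have key : μ ((fun ω => (S ω, D ω)) ⁻¹' E) = μ ((fun ω => (S ω, -D ω)) ⁻¹' E) := by
    rw [← Measure.map_apply (hS.prodMk hD) hEm, ← Measure.map_apply (hS.prodMk hD.neg : Measurable fun ω => (S ω, -D ω)) hEm,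
      hmaps]
  have hsub : {ω | t ≤ |S ω|}
      ⊆ ((fun ω => (S ω, D ω)) ⁻¹' E) ∪ ((fun ω => (S ω, -D ω)) ⁻¹' E) := by
    intro ω hω
    rcases le_total 0 (S ω * D ω) with h | h
    · exact Or.inl ⟨hω, h⟩
    · refine Or.inr ⟨hω, ?_⟩
      show 0 ≤ S ω * -D ω
      nlinarith
  have hsub2 : ((fun ω => (S ω, D ω)) ⁻¹' E) ⊆ {ω | t ≤ |S ω + D ω|} := by
    rintro ω ⟨ht, hsd⟩
    have habs : |S ω| ≤ |S ω + D ω| := sq_le_sq.1 (by nlinarith)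
    exact le_trans ht habs
  calc μ {ω | t ≤ |S ω|}
      ≤ μ (((fun ω => (S ω, D ω)) ⁻¹' E) ∪ ((fun ω => (S ω, -D ω)) ⁻¹' E)) :=
        measure_mono hsub
    _ ≤ μ ((fun ω => (S ω, D ω)) ⁻¹' E) + μ ((fun ω => (S ω, -D ω)) ⁻¹' E) :=
        measure_union_le _ _
    _ = 2 * μ ((fun ω => (S ω, D ω)) ⁻¹' E) := by rw [← key]; ring
    _ ≤ 2 * μ {ω | t ≤ |S ω + D ω|} := by
        exact mul_le_mul_right (measure_mono hsub2) 2

end helpers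

theorem stmt15 {Ω : Type*} [MeasurableSpace Ω] (μ : Measure Ω) [IsProbabilityMeasure μ]
    (X : Ω → ℝ) (Xs : ℕ → Ω → ℝ)
    (hX : Measurable X) (hXs : ∀ n, Measurable (Xs n))
    (hindep : iIndepFun Xs μ)
    (hident : ∀ n, IdentDistrib (Xs n) X μ μ)
    (hsymm : Measure.map X μ = Measure.map (fun ω => -X ω) μ)
    (G : ℝ → ℝ) (hGpos : ∀ t ≥ 0, 0 < G t) (hGmono : MonotoneOn G (Set.Ici 0)) :
    ∑' i : ℕ, ENNReal.ofReal (G ((2 : ℕ) ^ i)) *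
        μ {ω | ((2 : ℝ) ^ i) / 4 ≤ |partialSum Xs (2 ^ i) ω|} ≤
      4 * ∑' n : {n : ℕ // 1 ≤ n}, ((n : ℕ) : ℝ≥0∞)⁻¹ * ENNReal.ofReal (G (n : ℕ)) *
        μ {ω | ((n : ℕ) : ℝ) / 8 ≤ |partialSum Xs (n : ℕ) ω|} := by
  classical
  -- each Xs n is symmetric
  have hsym : ∀ n, μ.map (Xs n) = μ.map (fun ω => -(Xs n ω)) := by
    intro n
    calc μ.map (Xs n) = μ.map X := (hident n).map_eq
      _ = μ.map (fun ω => -X ω) := hsymm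
      _ = μ.map (fun ω => -(Xs n ω)) := ((hident n).comp measurable_neg).map_eq.symm
  set g : ℕ → ℝ≥0∞ := fun m =>
    ((m : ℝ≥0∞))⁻¹ * ENNReal.ofReal (G m) * μ {ω | (m : ℝ) / 8 ≤ |partialSum Xs m ω|} with hg
  set a : ℕ → ℝ≥0∞ := fun i => ENNReal.ofReal (G ((2 : ℕ) ^ i)) *
        μ {ω | ((2 : ℝ) ^ i) / 4 ≤ |partialSum Xs (2 ^ i) ω|} with ha
  -- per-block bound
  have block : ∀ i : ℕ, a i ≤ 4 * ∑ n ∈ Finset.Ico (2 ^ i) (2 ^ (i + 1)), g n := by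
    intro i
    set t : ℝ := ((2 : ℝ) ^ i) / 4 with ht
    set μi : ℝ≥0∞ := μ {ω | t ≤ |partialSum Xs (2 ^ i) ω|} with hμi
    set B : ℝ≥0∞ := ENNReal.ofReal (G ((2 : ℕ) ^ i)) with hB
    set L : ℝ≥0∞ := (((2 : ℕ) ^ (i + 1) : ℕ) : ℝ≥0∞)⁻¹ * B * (2⁻¹ * μi) with hL
    have hpern : ∀ n ∈ Finset.Ico (2 ^ i) (2 ^ (i + 1)), L ≤ g n := by
      intro n hn
      rw [Finset.mem_Ico] at hn
      have hn1 : (n : ℝ≥0∞) ≤ (((2 : ℕ) ^ (i + 1) : ℕ) : ℝ≥0∞) :=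
        Nat.cast_le.2 (le_of_lt hn.2)
      have f1 : (((2 : ℕ) ^ (i + 1) : ℕ) : ℝ≥0∞)⁻¹ ≤ ((n : ℝ≥0∞))⁻¹ :=
        ENNReal.inv_le_inv' hn1
      have f2 : B ≤ ENNReal.ofReal (G n) := by
        apply ENNReal.ofReal_le_ofReal
        apply hGmono (Set.mem_Ici.2 (by positivity)) (Set.mem_Ici.2 (by positivity))
        exact_mod_cast hn.1
      -- the half inequality
      have hsplit : ∀ ω, partialSum Xs (2 ^ i) ω + ∑ j ∈ Finset.Ico (2 ^ i) n, Xs j ω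
          = partialSum Xs n ω := by
        intro ω
        simp only [partialSum, Finset.range_eq_Ico]
        exact Finset.sum_Ico_consecutive _ (Nat.zero_le _) hn.1
      have hdisj : Disjoint (Finset.range (2 ^ i)) (Finset.Ico (2 ^ i) n) := by
        rw [Finset.disjoint_left]
        intro x hx hx'
        rw [Finset.mem_range] at hx
        rw [Finset.mem_Ico] at hx'
        omega
      have hind : IndepFun (partialSum Xs (2 ^ i))
          (fun ω => ∑ j ∈ Finset.Ico (2 ^ i) n, Xs j ω) μ := by
        have := indep_sum_sum hXs hindep (Finset.range (2 ^ i)) (Finset.Ico (2 ^ i) n) hdisj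
        exact this
      have hhalf : μi ≤ 2 * μ {ω | t ≤ |partialSum Xs n ω|} := by
        have h0 := half_ineq (μ := μ) (S := partialSum Xs (2 ^ i))
          (D := fun ω => ∑ j ∈ Finset.Ico (2 ^ i) n, Xs j ω)
          (Finset.measurable_sum _ fun j _ => hXs j)
          (Finset.measurable_sum _ fun j _ => hXs j)
          hind (finsetSum_symm hXs hindep hsym _) t
        have heset : {ω | t ≤ |partialSum Xs (2 ^ i) ω + ∑ j ∈ Finset.Ico (2 ^ i) n, Xs j ω|}
            = {ω | t ≤ |partialSum Xs n ω|} := by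
          ext ω; rw [Set.mem_setOf_eq, Set.mem_setOf_eq, hsplit ω]
        rwa [heset] at h0
      have hincl : {ω | t ≤ |partialSum Xs n ω|} ⊆ {ω | (n : ℝ) / 8 ≤ |partialSum Xs n ω|} := by
        intro ω hω
        have hcast : (n : ℝ) ≤ (2 : ℝ) ^ (i + 1) := by
          exact_mod_cast (le_of_lt hn.2)
        have : (n : ℝ) / 8 ≤ t := by
          rw [ht, pow_succ] at *
          linarith
        exact le_trans this hω
      have f3 : 2⁻¹ * μi ≤ μ {ω | (n : ℝ) / 8 ≤ |partialSum Xs n ω|} := by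
        have h2 : μi ≤ 2 * μ {ω | (n : ℝ) / 8 ≤ |partialSum Xs n ω|} :=
          le_trans hhalf (mul_le_mul_right (measure_mono hincl) 2)
        calc 2⁻¹ * μi ≤ 2⁻¹ * (2 * μ {ω | (n : ℝ) / 8 ≤ |partialSum Xs n ω|}) :=
            mul_le_mul_right h2 _
          _ = μ {ω | (n : ℝ) / 8 ≤ |partialSum Xs n ω|} := by
            rw [← mul_assoc, ENNReal.inv_mul_cancel two_ne_zero ENNReal.ofNat_ne_top, one_mul]
      exact mul_le_mul' (mul_le_mul' f1 f2) f3
    have hcard : (Finset.Ico (2 ^ i) (2 ^ (i + 1))).card = 2 ^ i := by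
      rw [Nat.card_Ico]
      have : 2 ^ (i + 1) = 2 * 2 ^ i := by ring
      omega
    have hsum : ((2 ^ i : ℕ) : ℝ≥0∞) * L ≤ ∑ n ∈ Finset.Ico (2 ^ i) (2 ^ (i + 1)), g n := by
      have := Finset.card_nsmul_le_sum _ _ _ hpern
      rwa [hcard, nsmul_eq_mul] at this
    -- scalar identity
    have hk : (4 : ℝ≥0∞) * ((2 ^ i : ℕ) : ℝ≥0∞) * ((((2 : ℕ) ^ (i + 1) : ℕ)) : ℝ≥0∞)⁻¹ * 2⁻¹
        = 1 := by
      have c1 : ((2 ^ i : ℕ) : ℝ≥0∞) = 2 ^ i := by push_cast; ring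
      have c2 : ((((2 : ℕ) ^ (i + 1) : ℕ)) : ℝ≥0∞) = 2 ^ (i + 1) := by push_cast; ring
      rw [c1, c2]
      have e1 : (4 : ℝ≥0∞) * 2 ^ i = 2 ^ (i + 2) := by rw [pow_add]; ring
      have e2 : ((2 : ℝ≥0∞) ^ (i + 1))⁻¹ * 2⁻¹ = (2 ^ (i + 2))⁻¹ := by
        rw [pow_succ (2 : ℝ≥0∞) (i + 1), ENNReal.mul_inv
          (Or.inl (pow_ne_zero _ (by norm_num)))
          (Or.inl (ENNReal.pow_ne_top ENNReal.ofNat_ne_top))]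
      calc (4 : ℝ≥0∞) * 2 ^ i * (2 ^ (i + 1))⁻¹ * 2⁻¹
          = ((4 : ℝ≥0∞) * 2 ^ i) * ((2 ^ (i + 1))⁻¹ * 2⁻¹) := by ring
        _ = 2 ^ (i + 2) * (2 ^ (i + 2))⁻¹ := by rw [e1, e2]
        _ = 1 := ENNReal.mul_inv_cancel (pow_ne_zero _ (by norm_num))
            (ENNReal.pow_ne_top ENNReal.ofNat_ne_top)
    have haL : a i = 4 * (((2 ^ i : ℕ) : ℝ≥0∞) * L) := by
      have rearr : (4 : ℝ≥0∞) * (((2 ^ i : ℕ) : ℝ≥0∞) *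
          ((((2 : ℕ) ^ (i + 1) : ℕ) : ℝ≥0∞)⁻¹ * B * (2⁻¹ * μi)))
          = ((4 : ℝ≥0∞) * ((2 ^ i : ℕ) : ℝ≥0∞) * ((((2 : ℕ) ^ (i + 1) : ℕ)) : ℝ≥0∞)⁻¹ * 2⁻¹)
            * (B * μi) := by ring
      rw [hL, rearr, hk, one_mul, ha, hB, hμi, ht]
    rw [haL]
    exact mul_le_mul_right hsum 4
  -- sum over dyadic blocks
  have hblocksum : ∑' i : ℕ, ∑ n ∈ Finset.Ico (2 ^ i) (2 ^ (i + 1)), g n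
      ≤ ∑' n : {n : ℕ // 1 ≤ n}, g n := by
    set φ : (Σ i : ℕ, {x : ℕ // x ∈ Finset.Ico (2 ^ i) (2 ^ (i + 1))}) → {n : ℕ // 1 ≤ n} :=
      fun p => ⟨p.2.1, by
        have := (Finset.mem_Ico.1 p.2.2).1
        have h1 : 1 ≤ 2 ^ p.1 := Nat.one_le_two_pow
        omega⟩ with hφ
    have hinj : Function.Injective φ := by
      rintro ⟨i, n, hn⟩ ⟨j, m, hm⟩ h
      have hnm : n = m := congrArg Subtype.val h
      subst hnm
      have hn' := Finset.mem_Ico.1 hn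
      have hm' := Finset.mem_Ico.1 hm
      have h1 : Nat.log 2 n = i := Nat.log_eq_of_pow_le_of_lt_pow hn'.1 hn'.2
      have h2 : Nat.log 2 n = j := Nat.log_eq_of_pow_le_of_lt_pow hm'.1 hm'.2
      have hij : i = j := by omega
      subst hij
      rfl
    have h1 : ∑' p : (Σ i : ℕ, {x : ℕ // x ∈ Finset.Ico (2 ^ i) (2 ^ (i + 1))}),
        g (φ p).1 ≤ ∑' n : {n : ℕ // 1 ≤ n}, g n.1 :=
      ENNReal.tsum_comp_le_tsum_of_injective hinj (fun n => g n.1)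
    have h2 : ∑' p : (Σ i : ℕ, {x : ℕ // x ∈ Finset.Ico (2 ^ i) (2 ^ (i + 1))}), g (φ p).1
        = ∑' i : ℕ, ∑ n ∈ Finset.Ico (2 ^ i) (2 ^ (i + 1)), g n := by
      rw [ENNReal.tsum_sigma']
      congr 1
      funext i
      exact Finset.tsum_subtype _ _
    rw [← h2]
    exact h1
  calc ∑' i : ℕ, a i ≤ ∑' i : ℕ, 4 * ∑ n ∈ Finset.Ico (2 ^ i) (2 ^ (i + 1)), g n :=
      ENNReal.tsum_le_tsum block
    _ = 4 * ∑' i : ℕ, ∑ n ∈ Finset.Ico (2 ^ i) (2 ^ (i + 1)), g n := ENNReal.tsum_mul_left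
    _ ≤ 4 * ∑' n : {n : ℕ // 1 ≤ n}, g n := mul_le_mul_right hblocksum 4
end
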